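/- arXiv:2005.11026 — 4 statements merged into one kernel-verified Lean document; each statement's English description precedes it below -/
import Mathlib

section
/- Let d be a demand vector on a capacitated undirected graph G=(V,E,c) that has exactly one target t (i.e., t is the unique vertex with d(t)>0). Then any flow f satisfying d can be decomposed into a family of flows {f_v : v a source of d} such that f(e)=Σ_v f_v(e) and |f(e)|=Σ_v |f_v(e)| for every edge e, and each f_v satisfies the demand vector d_v given by d_v(v)=d(v), d_v(t)=−d(v), and d_v(u)=0 for all other vertices u. -/
open Finset

/-- A flow `f` on an (arbitrarily oriented) undirected graph satisfies the
demand vector `d` if at every vertex the net inflow equals the demand. -/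
def satisfiesFlow {V E : Type*} [Fintype E] [DecidableEq V]
    (hd tl : E → V) (f : E → ℝ) (d : V → ℝ) : Prop :=
  ∀ v : V, d v = (∑ e : E, if hd e = v then f e else 0)
      - (∑ e : E, if tl e = v then f e else 0)

set_option linter.unusedSectionVars false

namespace FlowAux

variable {V E : Type*} [Fintype V] [Fintype E] [DecidableEq V] [DecidableEq E]

/-- net inflow (divergence) of flow `f` at vertex `u`. -/
def dvg (hd tl : E → V) (f : E → ℝ) (u : V) : ℝ :=
  (∑ e : E, if hd e = u then f e else 0) - (∑ e : E, if tl e = u then f e else 0)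

lemma satisfiesFlow_iff {hd tl : E → V} {f : E → ℝ} {d : V → ℝ} :
    satisfiesFlow hd tl f d ↔ ∀ v, d v = dvg hd tl f v := Iff.rfl

lemma sum_if_split (k : E → V) (u : V) (f g : E → ℝ) :
    (∑ e : E, if k e = u then f e + g e else 0)
      = (∑ e : E, if k e = u then f e else 0) + (∑ e : E, if k e = u then g e else 0) := by
  rw [← Finset.sum_add_distrib]
  exact Finset.sum_congr rfl fun e _ => by split <;> simp

lemma dvg_add (hd tl : E → V) (f g : E → ℝ) (u : V) :
    dvg hd tl (fun e => f e + g e) u = dvg hd tl f u + dvg hd tl g u := by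
  simp only [dvg, sum_if_split]; ring

lemma dvg_sub (hd tl : E → V) (f g : E → ℝ) (u : V) :
    dvg hd tl (fun e => f e - g e) u = dvg hd tl f u - dvg hd tl g u := by
  have h : ∀ (k : E → V), (∑ e : E, if k e = u then f e - g e else 0)
      = (∑ e : E, if k e = u then f e else 0) - (∑ e : E, if k e = u then g e else 0) := by
    intro k
    rw [← Finset.sum_sub_distrib]
    exact Finset.sum_congr rfl fun e _ => by split <;> simp
  simp only [dvg, h]; ring

lemma sum_dvg (hd tl : E → V) (f : E → ℝ) : ∑ u : V, dvg hd tl f u = 0 := by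
  have h : ∀ k : E → V, (∑ u : V, ∑ e : E, if k e = u then f e else 0) = ∑ e : E, f e := by
    intro k
    rw [Finset.sum_comm]
    exact Finset.sum_congr rfl fun e _ => by simp [Finset.sum_ite_eq]
  simp only [dvg, Finset.sum_sub_distrib, h, sub_self]

/-- single-source single-sink demand `a` at `v`, `-a` at `t`. -/
def pointDemand (v t : V) (a : ℝ) : V → ℝ :=
  fun u => if u = v then a else if u = t then -a else 0

/-- `x` has the (weak) sign of `y`. -/
def sgnOk (x y : ℝ) : Prop := (0 ≤ y → 0 ≤ x) ∧ (y ≤ 0 → x ≤ 0)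

lemma sgnOk_refl (x : ℝ) : sgnOk x x := ⟨id, id⟩

lemma sgnOk_trans {x y z : ℝ} (h1 : sgnOk x y) (h2 : sgnOk y z) : sgnOk x z :=
  ⟨fun h => h1.1 (h2.1 h), fun h => h1.2 (h2.2 h)⟩

/-- flow putting `ε` along edge `e` in direction `s` (`true` = tail→head). -/
def stepFlow (e : E) (s : Bool) (ε : ℝ) : E → ℝ :=
  fun e' => if e' = e then (if s then ε else -ε) else 0

def walkFlow : List (E × Bool) → ℝ → (E → ℝ)
  | [], _ => fun _ => 0
  | p :: L, ε => fun e => stepFlow p.1 p.2 ε e + walkFlow L ε e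

/-- directed walks in the oriented support structure. -/
inductive IsWalk (hd tl : E → V) : V → V → List (E × Bool) → Prop
  | nil (a : V) : IsWalk hd tl a a []
  | cons {a c : V} {e : E} {s : Bool} {L : List (E × Bool)} :
      (if s then tl e else hd e) = a →
      IsWalk hd tl (if s then hd e else tl e) c L →
      IsWalk hd tl a c ((e, s) :: L)

/-- step respects the direction of `f`. -/
def dOk (f : E → ℝ) (p : E × Bool) : Prop :=
  (p.2 = true → 0 < f p.1) ∧ (p.2 = false → f p.1 < 0)

lemma sum_if_if (k : E → V) (u : V) (e : E) (a : ℝ) :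
    (∑ e' : E, if k e' = u then (if e' = e then a else 0) else 0)
      = if k e = u then a else 0 := by
  have h : ∀ e' : E, (if k e' = u then (if e' = e then a else 0) else 0)
      = if e' = e then (if k e' = u then a else 0) else 0 := by
    intro e'
    by_cases h1 : k e' = u <;> by_cases h2 : e' = e <;> simp [h1, h2]
  rw [Finset.sum_congr rfl fun e' _ => h e']
  simp [Finset.sum_ite_eq']

lemma dvg_stepFlow (hd tl : E → V) (e : E) (s : Bool) (ε : ℝ) (u : V) :
    dvg hd tl (stepFlow e s ε) u
      = (if (if s then hd e else tl e) = u then ε else 0)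
        - (if (if s then tl e else hd e) = u then ε else 0) := by
  simp only [dvg, stepFlow, sum_if_if]
  cases s <;> [skip; simp] <;>
    by_cases h1 : hd e = u <;> by_cases h2 : tl e = u <;> simp [h1, h2] <;> ring

lemma dvg_walkFlow (hd tl : E → V) (ε : ℝ) :
    ∀ {L : List (E × Bool)} {a b : V}, IsWalk hd tl a b L → ∀ u,
      dvg hd tl (walkFlow L ε) u
        = (if b = u then ε else 0) - (if a = u then ε else 0) := by
  intro L a b h
  induction h with
  | nil a =>
      intro u
      have : walkFlow ([] : List (E × Bool)) ε = fun _ => (0:ℝ) := rfl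
      simp [this, dvg]
  | @cons a c e s L ha hw ih =>
      intro u
      have : walkFlow ((e, s) :: L) ε
          = fun e' => stepFlow e s ε e' + walkFlow L ε e' := rfl
      rw [this, dvg_add, dvg_stepFlow, ih u, ← ha]
      ring

lemma walkFlow_not_mem (ε : ℝ) :
    ∀ (L : List (E × Bool)) (e : E), e ∉ L.map Prod.fst → walkFlow L ε e = 0 := by
  intro L
  induction L with
  | nil => intro e _; rfl
  | cons p L ih =>
      intro e he
      simp only [List.map_cons, List.mem_cons, not_or] at he
      have h1 : walkFlow (p :: L) ε e = stepFlow p.1 p.2 ε e + walkFlow L ε e := rfl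
      rw [h1, ih e he.2, stepFlow, if_neg he.1, add_zero]

lemma walkFlow_mem (ε : ℝ) :
    ∀ (L : List (E × Bool)) (e : E) (s : Bool), (L.map Prod.fst).Nodup → (e, s) ∈ L →
      walkFlow L ε e = if s then ε else -ε := by
  intro L
  induction L with
  | nil => intro e s _ h; simp at h
  | cons p L ih =>
      intro e s hnd hm
      simp only [List.map_cons, List.nodup_cons] at hnd
      have h1 : walkFlow (p :: L) ε e = stepFlow p.1 p.2 ε e + walkFlow L ε e := rfl
      rcases List.mem_cons.mp hm with h | h
      · subst h
        rw [h1, walkFlow_not_mem ε L e hnd.1, stepFlow, if_pos rfl, add_zero]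
      · have he : e ∈ L.map Prod.fst := List.mem_map.mpr ⟨(e, s), h, rfl⟩
        have hne : e ≠ p.1 := fun hh => hnd.1 (hh ▸ he)
        rw [h1, ih e s hnd.2 h, stepFlow, if_neg hne, zero_add]

lemma IsWalk.concat {hd tl : E → V} {a b : V} {L : List (E × Bool)} (hw : IsWalk hd tl a b L)
    (e : E) (s : Bool) (hb : (if s then tl e else hd e) = b) :
    IsWalk hd tl a (if s then hd e else tl e) (L ++ [(e, s)]) := by
  induction hw with
  | nil a => exact IsWalk.cons hb (IsWalk.nil _)
  | cons ha _ ih => exact IsWalk.cons ha (ih hb)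

lemma IsWalk.split {hd tl : E → V} :
    ∀ (X Y : List (E × Bool)) {a b : V}, IsWalk hd tl a b (X ++ Y) →
      ∃ m, IsWalk hd tl a m X ∧ IsWalk hd tl m b Y := by
  intro X
  induction X with
  | nil => intro Y a b h; exact ⟨a, IsWalk.nil a, h⟩
  | cons p X ih =>
      intro Y a b h
      obtain ⟨e, s⟩ := p
      cases h with
      | cons ha hw =>
          obtain ⟨m, h1, h2⟩ := ih Y hw
          exact ⟨m, IsWalk.cons ha h1, h2⟩

/-- extract an edge-nodup walk. -/
lemma walk_simp {hd tl : E → V} (f : E → ℝ) :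
    ∀ (k : ℕ) (L : List (E × Bool)) (a b : V), L.length ≤ k →
      IsWalk hd tl a b L → (∀ p ∈ L, dOk f p) →
      ∃ L', IsWalk hd tl a b L' ∧ (∀ p ∈ L', p ∈ L) ∧ (L'.map Prod.fst).Nodup := by
  intro k
  induction k with
  | zero =>
      intro L a b hlen hw _
      have : L = [] := List.eq_nil_of_length_eq_zero (Nat.le_zero.mp hlen)
      subst this
      exact ⟨[], hw, by simp, by simp⟩
  | succ k ih =>
      intro L a b hlen hw hdir
      cases L with
      | nil => exact ⟨[], hw, by simp, by simp⟩
      | cons p M =>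
          obtain ⟨e, s⟩ := p
          cases hw with
          | cons ha hw' =>
              by_cases hp : e ∈ M.map Prod.fst
              · -- e occurs again later; cut out the cycle
                obtain ⟨q, hqM, hq1⟩ := List.mem_map.mp hp
                obtain ⟨M1, M2, hM⟩ := List.append_of_mem hqM
                -- q has the same direction as (e,s)
                have hq2 : q.2 = s := by
                  have h1 := hdir (e, s) (List.mem_cons_self)
                  have h2 := hdir q (List.mem_cons_of_mem _ hqM)
                  cases hs : s <;> cases hqs : q.2
                  · rfl
                  · exfalso
                    have := h1.2 (by rw [hs])
                    have := h2.1 (by rw [hqs])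
                    rw [hq1] at this
                    linarith
                  · exfalso
                    have := h1.1 (by rw [hs])
                    have := h2.2 (by rw [hqs])
                    rw [hq1] at this
                    linarith
                  · rfl
                have hqes : q = (e, s) := Prod.ext hq1 hq2
                subst hM
                obtain ⟨m, _, h2⟩ := IsWalk.split M1 (q :: M2) hw'
                rw [hqes] at h2
                cases h2 with
                | cons hm hw2 =>
                    have hw3 : IsWalk hd tl a b ((e, s) :: M2) := IsWalk.cons ha hw2
                    have hlen2 : ((e, s) :: M2).length ≤ k := by
                      simp only [List.length_cons, List.length_append] at hlen ⊢
                      omega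
                    have hsub : ∀ r ∈ (e, s) :: M2, r ∈ (e, s) :: (M1 ++ q :: M2) := by
                      intro r hr
                      rcases List.mem_cons.mp hr with h | h
                      · exact h ▸ List.mem_cons_self
                      · exact List.mem_cons_of_mem _
                          (List.mem_append.mpr (Or.inr (List.mem_cons_of_mem _ h)))
                    obtain ⟨L', hw4, hsub2, hnd⟩ := ih ((e, s) :: M2) a b hlen2 hw3
                      (fun r hr => hdir r (hsub r hr))
                    exact ⟨L', hw4, fun r hr => hsub r (hsub2 r hr), hnd⟩
              · -- e does not occur again
                have hlen2 : M.length ≤ k := by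
                  simp only [List.length_cons] at hlen; omega
                obtain ⟨M', hw2, hsub, hnd⟩ := ih M _ b hlen2 hw'
                  (fun r hr => hdir r (List.mem_cons_of_mem _ hr))
                refine ⟨(e, s) :: M', IsWalk.cons ha hw2, ?_, ?_⟩
                · intro r hr
                  rcases List.mem_cons.mp hr with h | h
                  · exact h ▸ List.mem_cons_self
                  · exact List.mem_cons_of_mem _ (hsub r h)
                · simp only [List.map_cons, List.nodup_cons]
                  refine ⟨fun hh => hp ?_, ?_⟩
                  · obtain ⟨r, hr, hr1⟩ := List.mem_map.mp hh
                    exact List.mem_map.mpr ⟨r, hsub r hr, hr1⟩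
                  · exact hnd

/-- reachability: from a vertex of negative divergence one can reach, along the
support of `f`, a vertex of positive divergence. -/
lemma reach (hd tl : E → V) (f : E → ℝ) (v : V) (hv : dvg hd tl f v < 0) :
    ∃ u L, 0 < dvg hd tl f u ∧ IsWalk hd tl v u L ∧ (∀ p ∈ L, dOk f p) := by
  classical
  set Rp : V → Prop := fun u => ∃ L, IsWalk hd tl v u L ∧ ∀ p ∈ L, dOk f p with hRp
  set R : Finset V := univ.filter Rp with hR
  have hvR : v ∈ R := by
    rw [hR, mem_filter]
    exact ⟨mem_univ v, ⟨[], IsWalk.nil v, by simp⟩⟩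
  -- closure under support steps
  have hclose : ∀ (u : V) (e : E) (s : Bool), u ∈ R → (if s then tl e else hd e) = u →
      (s = true → 0 < f e) → (s = false → f e < 0) → (if s then hd e else tl e) ∈ R := by
    intro u e s hu he h1 h2
    rw [hR, mem_filter] at hu ⊢
    obtain ⟨-, L, hw, hd'⟩ := hu
    refine ⟨mem_univ _, L ++ [(e, s)], hw.concat e s he, ?_⟩
    intro p hp
    rcases List.mem_append.mp hp with h | h
    · exact hd' p h
    · have : p = (e, s) := List.mem_singleton.mp h
      subst this
      exact ⟨h1, h2⟩
  -- the divergence summed over R is the net flow into R, which is nonnegative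
  have hsum : ∑ u ∈ R, dvg hd tl f u
      = ∑ e : E, ((if hd e ∈ R then f e else 0) - (if tl e ∈ R then f e else 0)) := by
    have h : ∀ k : E → V, (∑ u ∈ R, ∑ e : E, if k e = u then f e else 0)
        = ∑ e : E, if k e ∈ R then f e else 0 := by
      intro k
      rw [Finset.sum_comm]
      exact Finset.sum_congr rfl fun e _ => by rw [Finset.sum_ite_eq]
    simp only [dvg, Finset.sum_sub_distrib, h]
  have hterm : ∀ e : E,
      0 ≤ (if hd e ∈ R then f e else 0) - (if tl e ∈ R then f e else 0) := by
    intro e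
    by_cases h1 : hd e ∈ R <;> by_cases h2 : tl e ∈ R <;> simp [h1, h2]
    · -- hd ∈ R, tl ∉ R : f e ≥ 0, else tl e reachable
      by_contra hneg
      push_neg at hneg
      have := hclose (hd e) e false h1 (by simp) (by simp) (fun _ => hneg)
      simp at this
      exact h2 this
    · -- tl ∈ R, hd ∉ R : f e ≤ 0
      by_contra hneg
      push_neg at hneg
      have := hclose (tl e) e true h2 (by simp) (fun _ => hneg) (by simp)
      simp at this
      exact h1 this
  have hpos : 0 ≤ ∑ u ∈ R, dvg hd tl f u := by
    rw [hsum]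
    exact Finset.sum_nonneg fun e _ => hterm e
  by_contra hno
  push_neg at hno
  have hle : ∀ u ∈ R.erase v, dvg hd tl f u ≤ 0 := by
    intro u hu
    by_contra hgt
    push_neg at hgt
    obtain ⟨-, L, hw, hd'⟩ := mem_filter.mp (Finset.mem_of_mem_erase hu)
    obtain ⟨p, hpL, hnd⟩ := hno u L hgt hw
    exact hnd (hd' p hpL)
  have : ∑ u ∈ R, dvg hd tl f u < 0 := by
    rw [← Finset.add_sum_erase R _ hvR]
    have := Finset.sum_nonpos hle
    linarith
  linarith

lemma btw_sgn {x y : ℝ} (h : (0 ≤ x ∧ x ≤ y) ∨ (y ≤ x ∧ x ≤ 0)) :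
    sgnOk x y ∧ sgnOk (y - x) y := by
  constructor <;> constructor <;> intro h' <;> rcases h with ⟨h1, h2⟩ | ⟨h1, h2⟩ <;> linarith

lemma sgnOk_add {x y z : ℝ} (h1 : sgnOk x z) (h2 : sgnOk y z) : sgnOk (x + y) z :=
  ⟨fun h => add_nonneg (h1.1 h) (h2.1 h), fun h => add_nonpos (h1.2 h) (h2.2 h)⟩

lemma foldr_min (g : E × Bool → ℝ) (c : ℝ) :
    ∀ L : List (E × Bool),
      (L.foldr (fun p r => min (g p) r) c ≤ c) ∧
      (∀ p ∈ L, L.foldr (fun p r => min (g p) r) c ≤ g p) ∧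
      (L.foldr (fun p r => min (g p) r) c = c ∨
        ∃ p ∈ L, L.foldr (fun p r => min (g p) r) c = g p) := by
  intro L
  induction L with
  | nil => exact ⟨le_refl _, by simp, Or.inl rfl⟩
  | cons q L ih =>
      obtain ⟨h1, h2, h3⟩ := ih
      have hfold : (q :: L).foldr (fun p r => min (g p) r) c
          = min (g q) (L.foldr (fun p r => min (g p) r) c) := rfl
      rw [hfold]
      refine ⟨le_trans (min_le_right _ _) h1, ?_, ?_⟩
      · intro p hp
        rcases List.mem_cons.mp hp with h | h
        · exact h ▸ min_le_left _ _
        · exact le_trans (min_le_right _ _) (h2 p h)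
      · rcases le_total (g q) (L.foldr (fun p r => min (g p) r) c) with h | h
        · exact Or.inr ⟨q, List.mem_cons_self, min_eq_left h⟩
        · rw [min_eq_right h]
          rcases h3 with h' | ⟨p, hp, h'⟩
          · exact Or.inl h'
          · exact Or.inr ⟨p, List.mem_cons_of_mem _ hp, h'⟩

/-- Lemma A: peel off from `f` a flow routing `|d v|` units from the source `v`
to the unique target `t`, sign-compatibly with `f`. -/
lemma lemA (hd tl : E → V) :
    ∀ (n : ℕ) (f : E → ℝ) (d : V → ℝ) (t v : V),
      (univ.filter fun e => f e ≠ 0).card ≤ n →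
      (∀ u, u ≠ t → d u ≤ 0) → d v < 0 → satisfiesFlow hd tl f d →
      ∃ f1 : E → ℝ, satisfiesFlow hd tl f1 (pointDemand v t (d v)) ∧
        ∀ e, sgnOk (f1 e) (f e) ∧ sgnOk (f e - f1 e) (f e) := by
  intro n
  induction n with
  | zero =>
      intro f d t v hcard huniq hv hf
      exfalso
      have hf0 : ∀ e, f e = 0 := by
        intro e
        by_contra h
        have hm : e ∈ univ.filter (fun e => f e ≠ 0) :=
          mem_filter.mpr ⟨mem_univ e, h⟩
        have := Finset.card_pos.mpr ⟨e, hm⟩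
        omega
      have h0 : dvg hd tl f v = 0 := by simp [dvg, hf0]
      have := satisfiesFlow_iff.mp hf v
      rw [this, h0] at hv
      linarith
  | succ n ih =>
      intro f d t v hcard huniq hv hf
      classical
      have hfd := satisfiesFlow_iff.mp hf
      have hdv : dvg hd tl f v < 0 := (hfd v) ▸ hv
      obtain ⟨u, L0, hu, hw0, hdir0⟩ := reach hd tl f v hdv
      have hut : u = t := by
        by_contra h
        have h1 := huniq u h
        rw [hfd u] at h1
        linarith
      rw [hut] at hu hw0
      have hdt : 0 < d t := by rw [hfd t]; exact hu
      have hvt : v ≠ t := fun h => by rw [h] at hv; linarith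
      obtain ⟨L, hw, hsubL, hnd⟩ := walk_simp f L0.length L0 v t le_rfl hw0 hdir0
      have hdirL : ∀ p ∈ L, dOk f p := fun p hp => hdir0 p (hsubL p hp)
      set ε := L.foldr (fun p r => min (|f p.1|) r) (-(d v)) with hεdef
      obtain ⟨hε1, hε2, hε3⟩ := foldr_min (fun p => |f p.1|) (-(d v)) L
      have hεpos : 0 < ε := by
        rcases hε3 with h | ⟨p, hp, h⟩
        · rw [hεdef, h]; linarith
        · rw [hεdef, h]
          have hd' := hdirL p hp
          cases hs : p.2
          · have := hd'.2 hs; exact abs_pos.mpr (ne_of_lt this)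
          · have := hd'.1 hs; exact abs_pos.mpr (ne_of_gt this)
      have hdvgp : ∀ u', dvg hd tl (walkFlow L ε) u'
          = (if t = u' then ε else 0) - (if v = u' then ε else 0) :=
        dvg_walkFlow hd tl ε hw
      -- per-edge: walkFlow is between 0 and f
      have hbtw : ∀ e, (0 ≤ walkFlow L ε e ∧ walkFlow L ε e ≤ f e) ∨
          (f e ≤ walkFlow L ε e ∧ walkFlow L ε e ≤ 0) := by
        intro e
        by_cases he : e ∈ L.map Prod.fst
        · obtain ⟨q, hq, hq1⟩ := List.mem_map.mp he
          have hq' : (e, q.2) ∈ L := by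
            have hqe : q = (e, q.2) := Prod.ext hq1 rfl
            rwa [hqe] at hq
          have hd' := hdirL q hq
          have hval := walkFlow_mem ε L e q.2 hnd hq'
          have hle : ε ≤ |f e| := by rw [hεdef, ← hq1]; exact hε2 q hq
          cases hs : q.2
          · have hneg : f e < 0 := hq1 ▸ hd'.2 hs
            rw [abs_of_neg hneg] at hle
            rw [hs] at hval
            simp only [Bool.false_eq_true, if_false] at hval
            right
            rw [hval]
            constructor <;> linarith
          · have hpos : 0 < f e := hq1 ▸ hd'.1 hs
            rw [abs_of_pos hpos] at hle
            rw [hs] at hval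
            simp only [if_true] at hval
            left
            rw [hval]
            constructor <;> linarith
        · rw [walkFlow_not_mem ε L e he]
          rcases le_total 0 (f e) with h | h
          · exact Or.inl ⟨le_refl 0, h⟩
          · exact Or.inr ⟨h, le_refl 0⟩
      by_cases hcase : ε = -(d v)
      · -- done in one shot
        refine ⟨walkFlow L ε, ?_, fun e => btw_sgn (hbtw e)⟩
        apply satisfiesFlow_iff.mpr
        intro u'
        rw [hdvgp u']
        simp only [pointDemand]
        by_cases h1 : u' = v <;> by_cases h2 : u' = t
        · exact absurd (h1.symm.trans h2) hvt
        · rw [if_pos h1, if_neg (show ¬ t = u' from fun h => h2 h.symm),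
            if_pos (show v = u' from h1.symm), hcase]
          ring
        · rw [if_neg h1, if_pos h2, if_pos (show t = u' from h2.symm),
            if_neg (show ¬ v = u' from fun h => h1 h.symm), hcase]
          ring
        · rw [if_neg h1, if_neg h2, if_neg (show ¬ t = u' from fun h => h2 h.symm),
            if_neg (show ¬ v = u' from fun h => h1 h.symm)]
          ring
      · -- recursive case: some edge gets zeroed
        have hεlt : ε < -(d v) := lt_of_le_of_ne hε1 hcase
        obtain ⟨p0, hp0L, hp0⟩ := hε3.resolve_left hcase
        set f' := fun e => f e - walkFlow L ε e with hf'def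
        have hp0mem : (p0.1, p0.2) ∈ L := by cases p0; exact hp0L
        have hpε : ε = |f p0.1| := by rw [hεdef]; exact hp0
        have hf'p0 : f' p0.1 = 0 := by
          have hval := walkFlow_mem ε L p0.1 p0.2 hnd hp0mem
          have hd' := hdirL p0 hp0L
          cases hs : p0.2
          · have hneg : f p0.1 < 0 := hd'.2 hs
            rw [hs] at hval
            simp only [Bool.false_eq_true, if_false] at hval
            simp only [hf'def]
            rw [hval, hpε, abs_of_neg hneg]; ring
          · have hpos : 0 < f p0.1 := hd'.1 hs
            rw [hs] at hval
            simp only [if_true] at hval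
            simp only [hf'def]
            rw [hval, hpε, abs_of_pos hpos]; ring
        have hfp0 : f p0.1 ≠ 0 := by
          intro h
          rw [hpε, h] at hεpos
          simp at hεpos
        have hsub : (univ.filter fun e => f' e ≠ 0)
            ⊆ ((univ.filter fun e => f e ≠ 0).erase p0.1) := by
          intro e he
          rw [mem_filter] at he
          rw [Finset.mem_erase, mem_filter]
          refine ⟨fun h => he.2 (h ▸ hf'p0), mem_univ e, fun h => ?_⟩
          apply he.2
          rcases hbtw e with ⟨h1, h2⟩ | ⟨h1, h2⟩ <;> simp only [hf'def] <;> rw [h] at * <;> linarith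
        have hcard' : (univ.filter fun e => f' e ≠ 0).card ≤ n := by
          have h1 := Finset.card_le_card hsub
          have h2 : p0.1 ∈ univ.filter (fun e => f e ≠ 0) :=
            mem_filter.mpr ⟨mem_univ _, hfp0⟩
          rw [Finset.card_erase_of_mem h2] at h1
          omega
        set d' := fun u' => if u' = v then d v + ε else if u' = t then d t - ε else d u'
          with hd'def
        have hsat' : satisfiesFlow hd tl f' d' := by
          apply satisfiesFlow_iff.mpr
          intro u'
          have : dvg hd tl f' u' = dvg hd tl f u' - dvg hd tl (walkFlow L ε) u' :=
            dvg_sub hd tl f (walkFlow L ε) u'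
          rw [this, ← hfd u', hdvgp u', hd'def]
          by_cases h1 : u' = v <;> by_cases h2 : u' = t
          · exact absurd (h1.symm.trans h2) hvt
          · simp only [if_pos h1]
            rw [if_neg (fun h : t = u' => (h1 ▸ hvt) h.symm), if_pos h1.symm, h1]
            ring
          · simp only [if_neg h1, if_pos h2]
            rw [if_pos h2.symm, if_neg (fun h : v = u' => h1 h.symm), h2]
            ring
          · simp only [if_neg h1, if_neg h2]
            rw [if_neg (fun h : t = u' => h2 h.symm), if_neg (fun h : v = u' => h1 h.symm)]
            ring
        have huniq' : ∀ u', u' ≠ t → d' u' ≤ 0 := by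
          intro u' hu'
          by_cases h1 : u' = v
          · have hh : d' u' = d v + ε := by rw [hd'def]; simp [h1]
            rw [hh]; linarith
          · have hh : d' u' = d u' := by rw [hd'def]; simp [h1, hu']
            rw [hh]; exact huniq u' hu'
        have hv' : d' v < 0 := by
          have hh : d' v = d v + ε := by rw [hd'def]; simp [if_neg hvt]
          rw [hh]; linarith
        obtain ⟨f1', hs1, hsgn⟩ := ih f' d' t v hcard' huniq' hv' hsat'
        have hd'v : d' v = d v + ε := by rw [hd'def]; simp
        refine ⟨fun e => f1' e + walkFlow L ε e, ?_, ?_⟩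
        · apply satisfiesFlow_iff.mpr
          intro u'
          have hadd : dvg hd tl (fun e => f1' e + walkFlow L ε e) u'
              = dvg hd tl f1' u' + dvg hd tl (walkFlow L ε) u' :=
            dvg_add hd tl f1' (walkFlow L ε) u'
          rw [hadd, ← satisfiesFlow_iff.mp hs1 u', hdvgp u', hd'v, pointDemand, pointDemand]
          by_cases h1 : u' = v <;> by_cases h2 : u' = t
          · exact absurd (h1.symm.trans h2) hvt
          · simp only [if_pos h1]
            rw [if_neg (fun h : t = u' => (h1 ▸ hvt) h.symm), if_pos h1.symm]
            ring
          · simp only [if_neg h1, if_pos h2]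
            rw [if_pos h2.symm, if_neg (fun h : v = u' => h1 h.symm)]
            ring
          · simp only [if_neg h1, if_neg h2]
            rw [if_neg (fun h : t = u' => h2 h.symm), if_neg (fun h : v = u' => h1 h.symm)]
            ring
        · intro e
          have hA := btw_sgn (hbtw e)
          have hB := hsgn e
          have hsg1 : sgnOk (f1' e) (f e) := sgnOk_trans hB.1 hA.2
          have hsg2 : sgnOk (walkFlow L ε e) (f e) := hA.1
          refine ⟨sgnOk_add hsg1 hsg2, ?_⟩
          have heq : f e - (f1' e + walkFlow L ε e) = f' e - f1' e := by
            simp only [hf'def]; ring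
          rw [heq]
          exact sgnOk_trans hB.2 hA.2

lemma sum_point (v0 t : V) (a b : ℝ) (h : v0 ≠ t) :
    (∑ u : V, if u = v0 then a else if u = t then b else 0) = a + b := by
  have h1 : ∀ u : V, (if u = v0 then a else if u = t then b else 0)
      = (if u = v0 then a else 0) + (if u = t then b else 0) := by
    intro u
    by_cases h1 : u = v0 <;> by_cases h2 : u = t
    · exact absurd (h1.symm.trans h2) h
    · simp [h1, h2, h, Ne.symm h]
    · simp [h1, h2, h, Ne.symm h]
    · simp [h1, h2, h, Ne.symm h]
  rw [Finset.sum_congr rfl fun u _ => h1 u, Finset.sum_add_distrib]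
  simp [Finset.sum_ite_eq']

lemma top (hd tl : E → V) :
    ∀ (n : ℕ) (f : E → ℝ) (d : V → ℝ) (t : V),
      (univ.filter fun v => d v < 0).card ≤ n →
      (∑ u : V, d u) = 0 → 0 < d t → (∀ u, u ≠ t → d u ≤ 0) →
      satisfiesFlow hd tl f d →
      ∃ g : V → E → ℝ,
        (∀ e, f e = ∑ v ∈ univ.filter (fun v => d v < 0), g v e) ∧
        (∀ v ∈ univ.filter (fun v => d v < 0),
          satisfiesFlow hd tl (g v) (pointDemand v t (d v))) ∧
        (∀ v ∈ univ.filter (fun v => d v < 0), ∀ e, sgnOk (g v e) (f e)) := by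
  intro n
  induction n with
  | zero =>
      intro f d t hcard hd0 ht huniq hf
      exfalso
      have hS : (univ.filter fun v => d v < 0) = ∅ :=
        Finset.card_eq_zero.mp (Nat.le_zero.mp hcard)
      have hzero : ∀ u : V, u ≠ t → d u = 0 := by
        intro u hu
        refine le_antisymm (huniq u hu) (not_lt.mp fun hlt => ?_)
        have : u ∈ univ.filter fun v => d v < 0 := mem_filter.mpr ⟨mem_univ u, hlt⟩
        rw [hS] at this
        exact absurd this (Finset.notMem_empty u)
      have : (∑ u : V, d u) = d t :=
        Finset.sum_eq_single_of_mem t (mem_univ t) fun u _ hu => hzero u hu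
      rw [hd0] at this
      linarith
  | succ n ih =>
      intro f d t hcard hd0 ht huniq hf
      set S := univ.filter fun v => d v < 0 with hSdef
      have hSne : S.Nonempty := by
        rw [Finset.nonempty_iff_ne_empty]
        intro hS
        have hzero : ∀ u : V, u ≠ t → d u = 0 := by
          intro u hu
          refine le_antisymm (huniq u hu) (not_lt.mp fun hlt => ?_)
          have : u ∈ S := mem_filter.mpr ⟨mem_univ u, hlt⟩
          rw [hS] at this
          exact absurd this (Finset.notMem_empty u)
        have : (∑ u : V, d u) = d t :=
          Finset.sum_eq_single_of_mem t (mem_univ t) fun u _ hu => hzero u hu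
        rw [hd0] at this
        linarith
      obtain ⟨v0, hv0S⟩ := hSne
      have hv0 : d v0 < 0 := (mem_filter.mp hv0S).2
      have hv0t : v0 ≠ t := fun h => by rw [h] at hv0; linarith
      by_cases hS1 : S.card = 1
      · -- single source
        obtain ⟨a, ha⟩ := Finset.card_eq_one.mp hS1
        have hSv0 : S = {v0} := by
          rw [ha] at hv0S ⊢
          rw [Finset.mem_singleton.mp hv0S]
        have hzero : ∀ u, u ≠ v0 → u ≠ t → d u = 0 := by
          intro u h1 h2
          refine le_antisymm (huniq u h2) (not_lt.mp fun hlt => ?_)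
          have : u ∈ S := mem_filter.mpr ⟨mem_univ u, hlt⟩
          rw [hSv0] at this
          exact h1 (Finset.mem_singleton.mp this)
        have hsum : (∑ u : V, d u) = d v0 + d t := by
          have h1 : ∀ u : V, d u = (if u = v0 then d v0 else if u = t then d t else 0) := by
            intro u
            by_cases h1 : u = v0 <;> by_cases h2 : u = t
            · exact absurd (h1.symm.trans h2) hv0t
            · rw [if_pos h1, h1]
            · rw [if_neg h1, if_pos h2, h2]
            · rw [if_neg h1, if_neg h2, hzero u h1 h2]
          rw [Finset.sum_congr rfl fun u _ => h1 u, sum_point v0 t _ _ hv0t]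
        have hdt : d t = -(d v0) := by rw [hd0] at hsum; linarith
        have hdemand : ∀ u, d u = pointDemand v0 t (d v0) u := by
          intro u
          rw [pointDemand]
          by_cases h1 : u = v0 <;> by_cases h2 : u = t
          · exact absurd (h1.symm.trans h2) hv0t
          · rw [if_pos h1, h1]
          · rw [if_neg h1, if_pos h2, h2, hdt]
          · rw [if_neg h1, if_neg h2, hzero u h1 h2]
        refine ⟨fun _ => f, ?_, ?_, ?_⟩
        · intro e
          rw [hSv0, Finset.sum_singleton]
        · intro v hv
          rw [hSv0] at hv
          have hvv : v = v0 := Finset.mem_singleton.mp hv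
          subst hvv
          intro u
          rw [← hdemand u]
          exact hf u
        · intro v hv e
          exact sgnOk_refl _
      · -- at least two sources
        have hS2 : 1 < S.card := by
          have := Finset.card_pos.mpr ⟨v0, hv0S⟩
          omega
        obtain ⟨a, ha, b, hb, hab⟩ := Finset.one_lt_card.mp hS2
        have hw : ∃ w ∈ S, w ≠ v0 := by
          by_cases h : a = v0
          · exact ⟨b, hb, fun hh => hab (hh ▸ h ▸ rfl)⟩
          · exact ⟨a, ha, h⟩
        obtain ⟨w, hwS, hwv0⟩ := hw
        have hwneg : d w < 0 := (mem_filter.mp hwS).2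
        have hwt : w ≠ t := fun h => by rw [h] at hwneg; linarith
        have hfd := satisfiesFlow_iff.mp hf
        -- peel off source v0
        obtain ⟨f1, hs1, hsgn1⟩ := lemA hd tl (univ.filter fun e => f e ≠ 0).card
          f d t v0 le_rfl huniq hv0 hf
        have hfd1 := satisfiesFlow_iff.mp hs1
        set f2 := fun e => f e - f1 e with hf2def
        set d' := fun u => if u = v0 then 0 else if u = t then d t + d v0 else d u
          with hd'def
        have hsat2 : satisfiesFlow hd tl f2 d' := by
          apply satisfiesFlow_iff.mpr
          intro u
          have hsub : dvg hd tl f2 u = dvg hd tl f u - dvg hd tl f1 u :=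
            dvg_sub hd tl f f1 u
          rw [hsub, ← hfd u, ← hfd1 u]
          by_cases h1 : u = v0 <;> by_cases h2 : u = t
          · exact absurd (h1.symm.trans h2) hv0t
          · have e1 : d' u = 0 := by simp [hd'def, h1]
            have e2 : pointDemand v0 t (d v0) u = d v0 := by simp [pointDemand, h1]
            rw [e1, e2, h1]
            ring
          · have e1 : d' u = d t + d v0 := by simp [hd'def, h1, h2, Ne.symm hv0t]
            have e2 : pointDemand v0 t (d v0) u = -(d v0) := by
              simp [pointDemand, h1, h2, Ne.symm hv0t]
            rw [e1, e2, h2]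
            ring
          · have e1 : d' u = d u := by simp [hd'def, h1, h2]
            have e2 : pointDemand v0 t (d v0) u = 0 := by simp [pointDemand, h1, h2]
            rw [e1, e2]
            ring
        have hd0' : (∑ u : V, d' u) = 0 := by
          rw [Finset.sum_congr rfl fun u _ => satisfiesFlow_iff.mp hsat2 u]
          exact sum_dvg hd tl f2
        have hAsum : d t + (d v0 + ∑ u ∈ (univ.erase t).erase v0, d u) = 0 := by
          rw [Finset.add_sum_erase _ d (Finset.mem_erase.mpr ⟨hv0t, mem_univ v0⟩)]
          rw [Finset.add_sum_erase _ d (mem_univ t)]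
          exact hd0
        have hAle : (∑ u ∈ (univ.erase t).erase v0, d u) ≤ d w := by
          have hwA : w ∈ (univ.erase t).erase v0 :=
            Finset.mem_erase.mpr ⟨hwv0, Finset.mem_erase.mpr ⟨hwt, mem_univ w⟩⟩
          rw [← Finset.add_sum_erase _ d hwA]
          have : (∑ u ∈ ((univ.erase t).erase v0).erase w, d u) ≤ 0 := by
            apply Finset.sum_nonpos
            intro u hu
            have h1 := Finset.mem_erase.mp (Finset.mem_of_mem_erase hu)
            exact huniq u ((Finset.mem_erase.mp h1.2).1)
          linarith
        have ht' : 0 < d' t := by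
          have h1 : d' t = d t + d v0 := by rw [hd'def]; simp [if_neg (Ne.symm hv0t)]
          rw [h1]
          linarith
        have huniq' : ∀ u, u ≠ t → d' u ≤ 0 := by
          intro u hu
          by_cases h1 : u = v0
          · have hh : d' u = 0 := by rw [hd'def]; simp [h1]
            rw [hh]
          · have hh : d' u = d u := by rw [hd'def]; simp [h1, hu]
            rw [hh]
            exact huniq u hu
        have hSS : (univ.filter fun u => d' u < 0) = S.erase v0 := by
          ext u
          rw [mem_filter, Finset.mem_erase, hSdef, mem_filter]
          constructor
          · rintro ⟨-, hu⟩
            by_cases h1 : u = v0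
            · rw [hd'def] at hu
              simp [h1] at hu
            · have hh : d' u = d u := by
                by_cases h2 : u = t
                · rw [h2] at hu ⊢
                  have := ht'
                  linarith
                · rw [hd'def]; simp [h1, h2]
              rw [hh] at hu
              exact ⟨h1, mem_univ u, hu⟩
          · rintro ⟨h1, -, hu⟩
            have h2 : u ≠ t := fun h => by rw [h] at hu; linarith
            have hh : d' u = d u := by rw [hd'def]; simp [h1, h2]
            rw [hh]
            exact ⟨mem_univ u, hu⟩
        have hcard' : (univ.filter fun u => d' u < 0).card ≤ n := by
          rw [hSS, Finset.card_erase_of_mem hv0S]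
          omega
        obtain ⟨g', hg1, hg2, hg3⟩ := ih f2 d' t hcard' hd0' ht' huniq' hsat2
        rw [hSS] at hg1 hg2 hg3
        refine ⟨Function.update g' v0 f1, ?_, ?_, ?_⟩
        · intro e
          rw [← Finset.insert_erase hv0S, Finset.sum_insert (Finset.notMem_erase v0 S),
            Function.update_self]
          have hre : (∑ v ∈ S.erase v0, Function.update g' v0 f1 v e)
              = ∑ v ∈ S.erase v0, g' v e :=
            Finset.sum_congr rfl fun v hv => by
              rw [Function.update_of_ne (Finset.ne_of_mem_erase hv)]
          rw [hre, ← hg1 e]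
          simp only [hf2def]
          ring
        · intro v hv
          by_cases h : v = v0
          · subst h
            rw [Function.update_self]
            exact hs1
          · rw [Function.update_of_ne h]
            have hv' : v ∈ S.erase v0 := Finset.mem_erase.mpr ⟨h, hv⟩
            have hvt : v ≠ t := by
              intro hh
              have := (mem_filter.mp hv).2
              rw [hh] at this
              linarith
            have hd'v : d' v = d v := by rw [hd'def]; simp [h, hvt]
            have := hg2 v hv'
            rwa [hd'v] at this
        · intro v hv e
          by_cases h : v = v0
          · subst h
            rw [Function.update_self]
            exact (hsgn1 e).1
          · rw [Function.update_of_ne h]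
            have hv' : v ∈ S.erase v0 := Finset.mem_erase.mpr ⟨h, hv⟩
            exact sgnOk_trans (hg3 v hv' e) (hsgn1 e).2

end FlowAux

/-- Lemma (canonical decomposition): if a demand vector `d` has exactly one target `t`
(the unique vertex with positive demand), then any flow satisfying `d` can be decomposed
into a family of flows, one for each source `v` (vertex with `d v < 0`), summing to `f`
both in value and in absolute value on every edge, where the flow of source `v`
satisfies the single-source single-target demand vector sending `|d v|` units
from `v` to `t`. -/
theorem flow_decomposition {V E : Type*} [Fintype V] [Fintype E] [DecidableEq V]
    (hd tl : E → V) (c : E → ℝ) (hc : ∀ e, 0 ≤ c e)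
    (d : V → ℝ) (hd0 : ∑ v : V, d v = 0)
    (t : V) (ht : 0 < d t) (huniq : ∀ v, v ≠ t → d v ≤ 0)
    (f : E → ℝ) (hf : satisfiesFlow hd tl f d) :
    ∃ g : V → E → ℝ,
      (∀ e, f e = ∑ v ∈ univ.filter (fun v => d v < 0), g v e) ∧
      (∀ e, |f e| = ∑ v ∈ univ.filter (fun v => d v < 0), |g v e|) ∧
      ∀ v, d v < 0 → satisfiesFlow hd tl (g v)
        (fun u => if u = v then d v else if u = t then -(d v) else 0) := by
  classical
  obtain ⟨g, hg1, hg2, hg3⟩ := FlowAux.top hd tl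
    (univ.filter fun v => d v < 0).card f d t le_rfl hd0 ht huniq hf
  refine ⟨g, hg1, ?_, ?_⟩
  · intro e
    rcases le_or_gt 0 (f e) with h | h
    · rw [abs_of_nonneg h, hg1 e]
      exact Finset.sum_congr rfl fun v hv => (abs_of_nonneg ((hg3 v hv e).1 h)).symm
    · rw [abs_of_neg h, hg1 e, ← Finset.sum_neg_distrib]
      exact Finset.sum_congr rfl fun v hv => (abs_of_nonpos ((hg3 v hv e).2 h.le)).symm
  · intro v hv
    exact hg2 v (mem_filter.mpr ⟨mem_univ v, hv⟩)
end

section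
/- Let G=(V,E,c) be a capacitated tree (connected acyclic undirected graph), d a supply vector on G, and v a median vertex for d. Then for every vertex w∈V and every flow f satisfying the demand vector d∘w, there exists a flow f' with |f'(e)| ≤ |f(e)| for every edge e that satisfies the demand vector d∘v. -/
open Finset

/-- `assign s v` is the demand vector `s ∘ v` obtained from the supply vector `s`
by making `v` the target: it agrees with `s` off `v` and has value
`-∑_{u ≠ v} s u` at `v`. -/
def assign {V : Type*} [Fintype V] [DecidableEq V] (s : V → ℝ) (v : V) : V → ℝ :=
  fun u => if u = v then -(∑ w ∈ univ.erase v, s w) else s u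

/-- The optimum of the maximum concurrent multi-commodity flow problem for
demand vectors `d i` on the capacitated graph given by `hd`, `tl`, `c`:
the largest `l ≥ 0` such that some valid multi-commodity flow satisfies `l • d i`
for all `i`. -/
noncomputable def lamD {V E ι : Type*} [Fintype V] [Fintype E] [Fintype ι] [DecidableEq V]
    (hd tl : E → V) (c : E → ℝ) (d : ι → V → ℝ) : ℝ :=
  sSup {l : ℝ | 0 ≤ l ∧ ∃ f : ι → E → ℝ,
    (∀ e, ∑ i, |f i e| ≤ c e) ∧
    ∀ i, satisfiesFlow hd tl (f i) (fun v => l * d i v)}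

/-- The optimum of the target location problem LoMuF for supply vectors `s i`:
the best value of `lamD` over all choices of targets. -/
noncomputable def lamS {V E ι : Type*} [Fintype V] [Fintype E] [Fintype ι] [DecidableEq V]
    (hd tl : E → V) (c : E → ℝ) (s : ι → V → ℝ) : ℝ :=
  sSup {l : ℝ | 0 ≤ l ∧ ∃ (v : ι → V) (f : ι → E → ℝ),
    (∀ e, ∑ i, |f i e| ≤ c e) ∧
    ∀ i, satisfiesFlow hd tl (f i) (fun u => l * assign (s i) (v i) u)}

open scoped Classical in
/-- `v` is a median vertex of the graph `G` for the (supply) vector `d`: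
for every connected component `C` of `G - v`, the total `|d|`-weight of `C`
is at most the total `|d|`-weight of its complement. -/
def IsMedian {V : Type*} [Fintype V] (G : SimpleGraph V) (d : V → ℝ) (v : V) : Prop :=
  ∀ C : (G.induce {w | w ≠ v}).ConnectedComponent,
    (∑ x : V, if h : x ≠ v then
        (if (G.induce {w | w ≠ v}).connectedComponentMk ⟨x, h⟩ = C then |d x| else 0)
      else 0)
    ≤ ∑ x : V, if h : x ≠ v then
        (if (G.induce {w | w ≠ v}).connectedComponentMk ⟨x, h⟩ = C then 0 else |d x|)
      else |d x|

section RerouteAux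
open SimpleGraph
open scoped Classical
variable {V : Type*} {G : SimpleGraph V}

private lemma reach_cover_aux {a b y x : V} (p : G.Walk y x) :
    ((G.deleteEdges {s(a, b)}).Reachable a y ∨ (G.deleteEdges {s(a, b)}).Reachable b y) →
    ((G.deleteEdges {s(a, b)}).Reachable a x ∨ (G.deleteEdges {s(a, b)}).Reachable b x) := by
  induction p with
  | nil => exact id
  | @cons y1 z1 x1 h q ih =>
    intro hy
    apply ih
    by_cases he : s(y1, z1) = s(a, b)
    · rw [Sym2.eq_iff] at he
      rcases he with ⟨h1, h2⟩ | ⟨h1, h2⟩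
      · exact Or.inr (by rw [h2])
      · exact Or.inl (by rw [h2])
    · have hadj : (G.deleteEdges {s(a, b)}).Adj y1 z1 :=
        SimpleGraph.deleteEdges_adj.mpr ⟨h, by simpa using he⟩
      rcases hy with hy | hy
      · exact Or.inl (hy.trans hadj.reachable)
      · exact Or.inr (hy.trans hadj.reachable)

private lemma tree_bridge (hT : G.IsTree) {a b : V} (hab : G.Adj a b) :
    ¬ (G.deleteEdges {s(a, b)}).Reachable a b :=
  (SimpleGraph.isBridge_iff).mp ((isAcyclic_iff_forall_adj_isBridge.mp hT.2) hab)

private lemma reach_induce {H : SimpleGraph V} (hle : H ≤ G) {v : V} {a x : V}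
    (p : H.Walk a x) :
    (∀ y ∈ p.support, y ≠ v) → ∀ (ha : a ≠ v) (hx : x ≠ v),
    (G.induce {w | w ≠ v}).Reachable ⟨a, ha⟩ ⟨x, hx⟩ := by
  induction p with
  | nil => exact fun _ ha hx => Reachable.refl _
  | @cons a1 b1 x1 h q ih =>
    intro hsup ha hx
    have hb : b1 ≠ v := hsup b1 (by simp)
    have h1 : (G.induce {w | w ≠ v}).Adj ⟨a1, ha⟩ ⟨b1, hb⟩ := hle h
    exact h1.reachable.trans (ih (fun y hy => hsup y (by simp [hy])) hb hx)

variable {E : Type*}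

private lemma sep_exists_unique (hT : G.IsTree) (hd tl : E → V)
    (hadj : ∀ u v, G.Adj u v ↔ ∃ e, (tl e = u ∧ hd e = v) ∨ (tl e = v ∧ hd e = u))
    (hinj : ∀ e e', ((tl e = tl e' ∧ hd e = hd e') ∨ (tl e = hd e' ∧ hd e = tl e'))
        → e = e')
    (u x : V) (hx : x ≠ u) :
    ∃! e : E, (hd e = u ∨ tl e = u) ∧
      ¬ (G.deleteEdges {s(tl e, hd e)}).Reachable u x := by
  obtain ⟨p, hp, -⟩ := hT.existsUnique_path u x
  cases p with
  | nil => exact absurd rfl hx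
  | @cons _ b _ h q =>
    obtain ⟨e0, he0⟩ := (hadj u b).mp h
    have hsym : s(tl e0, hd e0) = s(u, b) := by
      rcases he0 with ⟨h1, h2⟩ | ⟨h1, h2⟩
      · rw [h1, h2]
      · rw [h1, h2, Sym2.eq_swap]
    have hinc0 : hd e0 = u ∨ tl e0 = u := by
      rcases he0 with ⟨h1, h2⟩ | ⟨h1, h2⟩
      · exact Or.inr h1
      · exact Or.inl h2
    rw [Walk.cons_isPath_iff] at hp
    have hq : u ∉ q.support := hp.2
    have hbx : (G.deleteEdges {s(tl e0, hd e0)}).Reachable b x := by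
      refine ⟨q.toDeleteEdges _ (fun ed hed => ?_)⟩
      simp only [Set.mem_singleton_iff, hsym]
      intro hh
      rw [hh] at hed
      exact hq (q.fst_mem_support_of_mem_edges hed)
    have hnr0 : ¬ (G.deleteEdges {s(tl e0, hd e0)}).Reachable u x := by
      intro hr
      have hub : (G.deleteEdges {s(tl e0, hd e0)}).Reachable u b := hr.trans hbx.symm
      rw [hsym] at hub
      exact tree_bridge hT h hub
    refine ⟨e0, ⟨hinc0, hnr0⟩, ?_⟩
    rintro e' ⟨hinc, hnr⟩
    have hmem : s(tl e', hd e') ∈ (Walk.cons h q).edges := by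
      by_contra hne
      refine hnr ⟨(Walk.cons h q).toDeleteEdges _ (fun ed hed => ?_)⟩
      simp only [Set.mem_singleton_iff]
      intro hh
      rw [hh] at hed
      exact hne hed
    rw [Walk.edges_cons] at hmem
    rcases List.mem_cons.mp hmem with hmem | hmem
    · rw [Sym2.eq_iff] at hmem
      apply hinj e' e0
      rcases hmem with ⟨h1, h2⟩ | ⟨h1, h2⟩
      · rcases he0 with ⟨h3, h4⟩ | ⟨h3, h4⟩
        · exact Or.inl ⟨h1.trans h3.symm, h2.trans h4.symm⟩
        · exact Or.inr ⟨h1.trans h4.symm, h2.trans h3.symm⟩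
      · rcases he0 with ⟨h3, h4⟩ | ⟨h3, h4⟩
        · exact Or.inr ⟨h1.trans h4.symm, h2.trans h3.symm⟩
        · exact Or.inl ⟨h1.trans h3.symm, h2.trans h4.symm⟩
    · exfalso
      rcases hinc with h1 | h1
      · rw [Sym2.eq_swap] at hmem
        rw [h1] at hmem
        exact hq (q.fst_mem_support_of_mem_edges hmem)
      · rw [h1] at hmem
        exact hq (q.fst_mem_support_of_mem_edges hmem)

variable {E : Type*}


private def Ged (G : SimpleGraph V) (hd tl : E → V) (e : E) : SimpleGraph V :=
  G.deleteEdges {s(tl e, hd e)}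

section basic
variable (hd tl : E → V)

private lemma edge_adj
    (hadj : ∀ u v, G.Adj u v ↔ ∃ e, (tl e = u ∧ hd e = v) ∨ (tl e = v ∧ hd e = u))
    (e : E) : G.Adj (tl e) (hd e) :=
  (hadj _ _).mpr ⟨e, Or.inl ⟨rfl, rfl⟩⟩

private lemma ged_bridge
    (hadj : ∀ u v, G.Adj u v ↔ ∃ e, (tl e = u ∧ hd e = v) ∨ (tl e = v ∧ hd e = u))
    (hT : G.IsTree) (e : E) :
    ¬ (Ged G hd tl e).Reachable (tl e) (hd e) :=
  ((SimpleGraph.isBridge_iff).mp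
    ((isAcyclic_iff_forall_adj_isBridge.mp hT.2) (edge_adj hd tl hadj e)))

private lemma ged_cover (hT : G.IsTree) (e : E) (x : V) :
    (Ged G hd tl e).Reachable (tl e) x ∨ (Ged G hd tl e).Reachable (hd e) x := by
  obtain ⟨p⟩ := hT.1.preconnected (tl e) x
  exact reach_cover_aux p (Or.inl (Reachable.refl _))

private lemma ged_not_both
    (hadj : ∀ u v, G.Adj u v ↔ ∃ e, (tl e = u ∧ hd e = v) ∨ (tl e = v ∧ hd e = u))
    (hT : G.IsTree) (e : E) (x : V) :
    ¬ ((Ged G hd tl e).Reachable (tl e) x ∧ (Ged G hd tl e).Reachable (hd e) x) :=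
  fun ⟨h1, h2⟩ => ged_bridge hd tl hadj hT e (h1.trans h2.symm)

private lemma ged_other_adj
    (hadj : ∀ u v, G.Adj u v ↔ ∃ e, (tl e = u ∧ hd e = v) ∨ (tl e = v ∧ hd e = u))
    (hinj : ∀ e e', ((tl e = tl e' ∧ hd e = hd e') ∨ (tl e = hd e' ∧ hd e = tl e'))
        → e = e')
    {e e' : E} (hne : e' ≠ e) : (Ged G hd tl e).Adj (tl e') (hd e') := by
  refine SimpleGraph.deleteEdges_adj.mpr ⟨edge_adj hd tl hadj e', ?_⟩
  simp only [Set.mem_singleton_iff, Sym2.eq_iff]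
  rintro (⟨h1, h2⟩ | ⟨h1, h2⟩)
  · exact hne (hinj e' e (Or.inl ⟨h1, h2⟩))
  · exact hne (hinj e' e (Or.inr ⟨h1, h2⟩))

end basic

private lemma cut_formula [Fintype V] [Fintype E] [DecidableEq V]
    (hT : G.IsTree) (hd tl : E → V)
    [inst : ∀ (e : E) (x : V), Decidable ((Ged G hd tl e).Reachable (hd e) x)]
    (hadj : ∀ u v, G.Adj u v ↔ ∃ e, (tl e = u ∧ hd e = v) ∨ (tl e = v ∧ hd e = u))
    (hinj : ∀ e e', ((tl e = tl e' ∧ hd e = hd e') ∨ (tl e = hd e' ∧ hd e = tl e'))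
        → e = e')
    (g : E → ℝ) (d' : V → ℝ) (hg : satisfiesFlow hd tl g d') (e : E) :
    g e = ∑ x : V, if (Ged G hd tl e).Reachable (hd e) x then d' x else 0 := by
  have step : ∀ fn : E → V, ∀ e' : E,
      (∑ x : V, if (Ged G hd tl e).Reachable (hd e) x then
          (if fn e' = x then g e' else 0) else 0)
        = if (Ged G hd tl e).Reachable (hd e) (fn e') then g e' else 0 := by
    intro fn e'
    calc (∑ x : V, if (Ged G hd tl e).Reachable (hd e) x then
            (if fn e' = x then g e' else 0) else 0)
        = ∑ x : V, (if fn e' = x then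
            (if (Ged G hd tl e).Reachable (hd e) x then g e' else 0) else 0) :=
          Finset.sum_congr rfl (fun x _ => by split_ifs <;> rfl)
      _ = _ := by rw [Finset.sum_ite_eq]; simp
  symm
  calc (∑ x : V, if (Ged G hd tl e).Reachable (hd e) x then d' x else 0)
      = ∑ x : V, ((∑ e' : E, if (Ged G hd tl e).Reachable (hd e) x then
            (if hd e' = x then g e' else 0) else 0)
          - (∑ e' : E, if (Ged G hd tl e).Reachable (hd e) x then
            (if tl e' = x then g e' else 0) else 0)) := by
        refine Finset.sum_congr rfl (fun x _ => ?_)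
        by_cases hR : (Ged G hd tl e).Reachable (hd e) x
        · simp only [if_pos hR]
          exact hg x
        · simp [if_neg hR]
    _ = (∑ x : V, ∑ e' : E, if (Ged G hd tl e).Reachable (hd e) x then
            (if hd e' = x then g e' else 0) else 0)
          - (∑ x : V, ∑ e' : E, if (Ged G hd tl e).Reachable (hd e) x then
            (if tl e' = x then g e' else 0) else 0) := Finset.sum_sub_distrib _ _
    _ = (∑ e' : E, ∑ x : V, if (Ged G hd tl e).Reachable (hd e) x then
            (if hd e' = x then g e' else 0) else 0)
          - (∑ e' : E, ∑ x : V, if (Ged G hd tl e).Reachable (hd e) x then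
            (if tl e' = x then g e' else 0) else 0) := by
        congr 1
        · exact Finset.sum_comm
        · exact Finset.sum_comm
    _ = ∑ e' : E, ((if (Ged G hd tl e).Reachable (hd e) (hd e') then g e' else 0)
          - (if (Ged G hd tl e).Reachable (hd e) (tl e') then g e' else 0)) := by
        rw [← Finset.sum_sub_distrib]
        refine Finset.sum_congr rfl (fun e' _ => ?_)
        rw [step hd e', step tl e']
    _ = g e := by
        rw [Finset.sum_eq_single_of_mem e (Finset.mem_univ e)]
        · rw [if_pos (Reachable.refl _), if_neg, sub_zero]
          intro h
          exact ged_bridge hd tl hadj hT e h.symm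
        · intro e' _ hne
          have hiff : (Ged G hd tl e).Reachable (hd e) (hd e')
              ↔ (Ged G hd tl e).Reachable (hd e) (tl e') := by
            have hae := ged_other_adj hd tl hadj hinj (G := G) hne
            exact ⟨fun h => h.trans hae.symm.reachable, fun h => h.trans hae.reachable⟩
          by_cases hc : (Ged G hd tl e).Reachable (hd e) (hd e')
          · rw [if_pos hc, if_pos (hiff.mp hc), sub_self]
          · rw [if_neg hc, if_neg (fun h => hc (hiff.mpr h)), sub_self]
private lemma flow_exists [Fintype V] [Fintype E] [DecidableEq V]
    (hT : G.IsTree) (hd tl : E → V)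
    [inst : ∀ (e : E) (x : V), Decidable ((Ged G hd tl e).Reachable (hd e) x)]
    (hadj : ∀ u v, G.Adj u v ↔ ∃ e, (tl e = u ∧ hd e = v) ∨ (tl e = v ∧ hd e = u))
    (hinj : ∀ e e', ((tl e = tl e' ∧ hd e = hd e') ∨ (tl e = hd e' ∧ hd e = tl e'))
        → e = e')
    (hloop : ∀ e, tl e ≠ hd e)
    (d' : V → ℝ) (hsum : ∑ x : V, d' x = 0) :
    satisfiesFlow hd tl
      (fun e => ∑ x : V, if (Ged G hd tl e).Reachable (hd e) x then d' x else 0) d' := by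
  intro u
  show d' u = (∑ e : E, if hd e = u then
        (∑ x : V, if (Ged G hd tl e).Reachable (hd e) x then d' x else 0) else 0)
      - (∑ e : E, if tl e = u then
        (∑ x : V, if (Ged G hd tl e).Reachable (hd e) x then d' x else 0) else 0)
  set h : E → ℝ := fun e => ∑ x : V, if (Ged G hd tl e).Reachable u x then d' x else 0 with hh
  have hpart : ∀ e x, (¬ (Ged G hd tl e).Reachable (hd e) x) → (Ged G hd tl e).Reachable (tl e) x := by
    intro e x hn
    rcases ged_cover hd tl hT e x with h1 | h1
    · exact h1
    · exact absurd h1 hn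
  have hA : ∀ e : E, hd e = u →
      (∑ x : V, if (Ged G hd tl e).Reachable (hd e) x then d' x else 0) = h e := by
    intro e he
    rw [hh]
    exact Finset.sum_congr rfl (fun x _ => if_congr (by rw [he]) rfl rfl)
  have hB : ∀ e : E, tl e = u →
      (∑ x : V, if (Ged G hd tl e).Reachable (hd e) x then d' x else 0) = - h e := by
    intro e he
    have hsplit : (∑ x : V, if (Ged G hd tl e).Reachable (hd e) x then d' x else 0)
        + (∑ x : V, if (Ged G hd tl e).Reachable (tl e) x then d' x else 0)
        = ∑ x : V, d' x := by
      rw [← Finset.sum_add_distrib]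
      refine Finset.sum_congr rfl (fun x _ => ?_)
      by_cases hR : (Ged G hd tl e).Reachable (hd e) x
      · rw [if_pos hR, if_neg, add_zero]
        intro h1
        exact ged_not_both hd tl hadj hT e x ⟨h1, hR⟩
      · rw [if_neg hR, if_pos (hpart e x hR), zero_add]
    have h2 : (∑ x : V, if (Ged G hd tl e).Reachable (tl e) x then d' x else 0) = h e := by
      rw [hh]
      exact Finset.sum_congr rfl (fun x _ => if_congr (by rw [he]) rfl rfl)
    rw [h2, hsum] at hsplit
    linarith
  have e1 : (∑ e : E, if hd e = u then
        (∑ x : V, if (Ged G hd tl e).Reachable (hd e) x then d' x else 0) else 0)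
      = ∑ e : E, if hd e = u then h e else 0 := by
    refine Finset.sum_congr rfl (fun e _ => ?_)
    by_cases hc : hd e = u
    · rw [if_pos hc, if_pos hc, hA e hc]
    · rw [if_neg hc, if_neg hc]
  have e2 : (∑ e : E, if tl e = u then
        (∑ x : V, if (Ged G hd tl e).Reachable (hd e) x then d' x else 0) else 0)
      = - ∑ e : E, if tl e = u then h e else 0 := by
    rw [← Finset.sum_neg_distrib]
    refine Finset.sum_congr rfl (fun e _ => ?_)
    by_cases hc : tl e = u
    · rw [if_pos hc, if_pos hc, hB e hc]
    · rw [if_neg hc, if_neg hc, neg_zero]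
  rw [e1, e2, sub_neg_eq_add, ← Finset.sum_add_distrib]
  have e4 : (∑ e : E, ((if hd e = u then h e else 0) + (if tl e = u then h e else 0)))
      = ∑ e : E, if hd e = u ∨ tl e = u then h e else 0 := by
    refine Finset.sum_congr rfl (fun e _ => ?_)
    by_cases h1 : hd e = u <;> by_cases h2 : tl e = u
    · exact absurd (h2.trans h1.symm) (hloop e)
    · simp [h1, h2]
    · simp [h1, h2]
    · simp [h1, h2]
  rw [e4]
  have e5 : (∑ e : E, if hd e = u ∨ tl e = u then h e else 0)
      = ∑ e : E, ∑ x : V,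
          if (hd e = u ∨ tl e = u) ∧ (Ged G hd tl e).Reachable u x then d' x else 0 := by
    refine Finset.sum_congr rfl (fun e _ => ?_)
    by_cases hc : hd e = u ∨ tl e = u
    · rw [if_pos hc, hh]
      refine Finset.sum_congr rfl (fun x _ => ?_)
      by_cases hq : (Ged G hd tl e).Reachable u x
      · rw [if_pos hq, if_pos ⟨hc, hq⟩]
      · rw [if_neg hq, if_neg (fun hh' => hq hh'.2)]
    · rw [if_neg hc]
      exact (Finset.sum_eq_zero (fun x _ => if_neg (fun hh' => hc hh'.1))).symm
  rw [e5, Finset.sum_comm]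
  have e6 : ∀ x : V, (∑ e : E,
        if (hd e = u ∨ tl e = u) ∧ (Ged G hd tl e).Reachable u x then d' x else 0)
      = ((univ.filter (fun e : E =>
          (hd e = u ∨ tl e = u) ∧ (Ged G hd tl e).Reachable u x)).card : ℝ) * d' x := by
    intro x
    rw [← Finset.sum_filter, Finset.sum_const, nsmul_eq_mul]
  have e7 : ∀ x : V, (univ.filter (fun e : E =>
        (hd e = u ∨ tl e = u) ∧ ¬ (Ged G hd tl e).Reachable u x)).card
      = if x = u then 0 else 1 := by
    intro x
    by_cases hx : x = u
    · rw [if_pos hx, Finset.card_eq_zero]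
      refine Finset.filter_eq_empty_iff.mpr (fun e _ => ?_)
      rintro ⟨-, hr⟩
      cases hx
      exact hr (Reachable.refl _)
    · rw [if_neg hx, Finset.card_eq_one]
      obtain ⟨e0, he0, hu0⟩ := sep_exists_unique hT hd tl hadj hinj u x hx
      refine ⟨e0, ?_⟩
      ext e'
      simp only [Finset.mem_filter, Finset.mem_univ, true_and, Finset.mem_singleton]
      constructor
      · intro hp
        exact hu0 e' hp
      · rintro rfl
        exact he0
  have e8 : ∀ x : V, ((univ.filter (fun e : E =>
        (hd e = u ∨ tl e = u) ∧ (Ged G hd tl e).Reachable u x)).card : ℝ)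
      = ((univ.filter (fun e : E => hd e = u ∨ tl e = u)).card : ℝ)
        - (if x = u then (0:ℝ) else 1) := by
    intro x
    have hsplitc : (univ.filter (fun e : E =>
          (hd e = u ∨ tl e = u) ∧ (Ged G hd tl e).Reachable u x)).card
        + (univ.filter (fun e : E =>
          (hd e = u ∨ tl e = u) ∧ ¬ (Ged G hd tl e).Reachable u x)).card
        = (univ.filter (fun e : E => hd e = u ∨ tl e = u)).card := by
      rw [← Finset.filter_filter, ← Finset.filter_filter]
      exact Finset.card_filter_add_card_filter_not _
    have hc1 : ((univ.filter (fun e : E =>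
          (hd e = u ∨ tl e = u) ∧ (Ged G hd tl e).Reachable u x)).card : ℝ)
        + ((univ.filter (fun e : E =>
          (hd e = u ∨ tl e = u) ∧ ¬ (Ged G hd tl e).Reachable u x)).card : ℝ)
        = ((univ.filter (fun e : E => hd e = u ∨ tl e = u)).card : ℝ) := by
      exact_mod_cast congrArg (Nat.cast : ℕ → ℝ) hsplitc
    have hc2 : ((univ.filter (fun e : E =>
          (hd e = u ∨ tl e = u) ∧ ¬ (Ged G hd tl e).Reachable u x)).card : ℝ)
        = if x = u then (0:ℝ) else 1 := by
      rw [e7 x]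
      split_ifs <;> simp
    linarith
  rw [Finset.sum_congr rfl (fun x _ => e6 x), Finset.sum_congr rfl (fun x _ => by rw [e8 x])]
  have hst : ∀ x : V, (((univ.filter (fun e : E => hd e = u ∨ tl e = u)).card : ℝ)
        - (if x = u then (0:ℝ) else 1)) * d' x
      = ((univ.filter (fun e : E => hd e = u ∨ tl e = u)).card : ℝ) * d' x
        - (d' x - (if x = u then d' x else 0)) := by
    intro x
    split_ifs <;> ring
  rw [Finset.sum_congr rfl (fun x _ => hst x), Finset.sum_sub_distrib, ← Finset.mul_sum, hsum,
    Finset.sum_sub_distrib, hsum, Finset.sum_ite_eq' univ u d']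
  simp

private lemma assign_eq {V : Type*} [Fintype V] [DecidableEq V] (d : V → ℝ) (u0 x : V) :
    assign d u0 x = d x - (if x = u0 then (∑ y : V, d y) else 0) := by
  unfold assign
  by_cases hx : x = u0
  · rw [if_pos hx, if_pos hx]
    subst hx
    rw [Finset.sum_erase_eq_sub (Finset.mem_univ x)]
    ring
  · rw [if_neg hx, if_neg hx, sub_zero]

private lemma assign_sum {V : Type*} [Fintype V] [DecidableEq V] (d : V → ℝ) (u0 : V) :
    ∑ x : V, assign d u0 x = 0 := by
  rw [Finset.sum_congr rfl (fun x _ => assign_eq d u0 x), Finset.sum_sub_distrib,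
    Finset.sum_ite_eq' univ u0 (fun _ => ∑ y : V, d y)]
  simp

private lemma cut_assign {V : Type*} [Fintype V] [DecidableEq V] (d : V → ℝ) (u0 : V)
    (S : V → Prop) [DecidablePred S] :
    (∑ x : V, if S x then assign d u0 x else 0)
    = (∑ x : V, if S x then d x else 0) - (if S u0 then (∑ y : V, d y) else 0) := by
  have h1 : ∀ x : V, (if S x then assign d u0 x else 0)
      = (if S x then d x else 0) - (if x = u0 then (if S x then (∑ y : V, d y) else 0) else 0) := by
    intro x
    by_cases hS : S x
    · rw [if_pos hS, if_pos hS, assign_eq d u0 x]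
      by_cases hx : x = u0
      · rw [if_pos hx, if_pos hx, if_pos hS]
      · rw [if_neg hx, if_neg hx]
    · rw [if_neg hS, if_neg hS]
      simp [hS]
  rw [Finset.sum_congr rfl (fun x _ => h1 x), Finset.sum_sub_distrib]
  congr 1
  rw [Finset.sum_ite_eq' univ u0 (fun x => if S x then (∑ y : V, d y) else 0)]
  simp

private lemma abs_cut {V : Type*} [Fintype V] (d : V → ℝ) (hdle : ∀ x, d x ≤ 0)
    (S : V → Prop) [DecidablePred S] :
    |∑ x : V, if S x then d x else 0| = ∑ x : V, if S x then |d x| else 0 := by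
  rw [abs_of_nonpos (Finset.sum_nonpos (fun x _ => by
    split_ifs
    · exact hdle x
    · exact le_refl 0)), ← Finset.sum_neg_distrib]
  refine Finset.sum_congr rfl (fun x _ => ?_)
  split_ifs
  · rw [abs_of_nonpos (hdle x)]
  · simp

open scoped Classical in
private lemma median_side {V : Type*} [Fintype V] (G : SimpleGraph V) (d : V → ℝ) (v : V)
    (hv : IsMedian G d v) (T : V → Prop) [DecidablePred T] (y0 : V) (hy0 : T y0) (hvT : ¬ T v)
    (hconn : ∀ x, T x → ∀ (hx : x ≠ v) (hy : y0 ≠ v),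
      (G.induce {w | w ≠ v}).Reachable ⟨y0, hy⟩ ⟨x, hx⟩) :
    (∑ x : V, if T x then |d x| else 0) ≤ ∑ x : V, if T x then 0 else |d x| := by
  have hy0v : y0 ≠ v := fun h => hvT (h ▸ hy0)
  set C := (G.induce {w | w ≠ v}).connectedComponentMk ⟨y0, hy0v⟩ with hC
  have hmem : ∀ x, T x → ∀ (hxv : x ≠ v),
      (G.induce {w | w ≠ v}).connectedComponentMk ⟨x, hxv⟩ = C :=
    fun x hx hxv => (SimpleGraph.ConnectedComponent.sound (hconn x hx hxv hy0v)).symm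
  have h1 : (∑ x : V, if T x then |d x| else 0)
      ≤ ∑ x : V, if h : x ≠ v then
          (if (G.induce {w | w ≠ v}).connectedComponentMk ⟨x, h⟩ = C then |d x| else 0)
        else 0 := by
    refine Finset.sum_le_sum (fun x _ => ?_)
    by_cases hx : T x
    · have hxv : x ≠ v := fun h => hvT (h ▸ hx)
      rw [if_pos hx, dif_pos hxv, if_pos (hmem x hx hxv)]
    · rw [if_neg hx]
      split_ifs <;> simp [abs_nonneg]
  have h3 : (∑ x : V, if h : x ≠ v then
        (if (G.induce {w | w ≠ v}).connectedComponentMk ⟨x, h⟩ = C then 0 else |d x|)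
      else |d x|) ≤ ∑ x : V, if T x then 0 else |d x| := by
    refine Finset.sum_le_sum (fun x _ => ?_)
    by_cases hx : T x
    · have hxv : x ≠ v := fun h => hvT (h ▸ hx)
      rw [if_pos hx, dif_pos hxv, if_pos (hmem x hx hxv)]
    · rw [if_neg hx]
      split_ifs <;> simp [abs_nonneg]
  have h2 := hv C
  linarith

end RerouteAux

section MainProof
open scoped Classical

/-- Lemma (rerouting to a median on a tree): let `G` be a tree (presented with an
arbitrarily oriented edge type `E` via `hd`, `tl`), `d` a supply vector and `v` a
median vertex for `d`. Then for every vertex `w` and every flow `f` satisfying the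
demand vector `d ∘ w`, there is a flow `f'` edgewise dominated by `f` that
satisfies `d ∘ v`. -/
theorem tree_median_reroute {V E : Type*} [Fintype V] [Fintype E] [DecidableEq V]
    (G : SimpleGraph V) (hT : G.IsTree)
    (hd tl : E → V)
    (hloop : ∀ e, tl e ≠ hd e)
    (hadj : ∀ u v, G.Adj u v ↔ ∃ e, (tl e = u ∧ hd e = v) ∨ (tl e = v ∧ hd e = u))
    (hinj : ∀ e e', ((tl e = tl e' ∧ hd e = hd e') ∨ (tl e = hd e' ∧ hd e = tl e'))
        → e = e')
    (c : E → ℝ) (hc : ∀ e, 0 ≤ c e)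
    (d : V → ℝ) (hdle : ∀ u, d u ≤ 0)
    (v : V) (hv : IsMedian G d v)
    (w : V) (f : E → ℝ) (hf : satisfiesFlow hd tl f (assign d w)) :
    ∃ f' : E → ℝ, (∀ e, |f' e| ≤ |f e|) ∧ satisfiesFlow hd tl f' (assign d v) := by
    classical
  refine ⟨fun e => ∑ x : V, if (Ged G hd tl e).Reachable (hd e) x then assign d v x else 0,
    ?_, flow_exists hT hd tl hadj hinj hloop (assign d v) (assign_sum d v)⟩
  intro e
  have hfe : f e = ∑ x : V, if (Ged G hd tl e).Reachable (hd e) x then assign d w x else 0 :=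
    cut_formula hT hd tl hadj hinj f (assign d w) hf e
  rw [hfe]
  have hv1 : (∑ x : V, if (Ged G hd tl e).Reachable (hd e) x then assign d v x else 0)
      = (∑ x : V, if (Ged G hd tl e).Reachable (hd e) x then d x else 0)
        - (if (Ged G hd tl e).Reachable (hd e) v then (∑ y : V, d y) else 0) :=
    cut_assign d v (fun x => (Ged G hd tl e).Reachable (hd e) x)
  have hw1 : (∑ x : V, if (Ged G hd tl e).Reachable (hd e) x then assign d w x else 0)
      = (∑ x : V, if (Ged G hd tl e).Reachable (hd e) x then d x else 0)
        - (if (Ged G hd tl e).Reachable (hd e) w then (∑ y : V, d y) else 0) :=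
    cut_assign d w (fun x => (Ged G hd tl e).Reachable (hd e) x)
  show |∑ x : V, if (Ged G hd tl e).Reachable (hd e) x then assign d v x else 0| ≤ _
  rw [hv1, hw1]
  set a : ℝ := ∑ x : V, if (Ged G hd tl e).Reachable (hd e) x then d x else 0 with hadef
  set b : ℝ := ∑ x : V, if (Ged G hd tl e).Reachable (hd e) x then 0 else d x with hbdef
  have hab : a + b = ∑ y : V, d y := by
    rw [hadef, hbdef, ← Finset.sum_add_distrib]
    exact Finset.sum_congr rfl (fun x _ => by split_ifs <;> simp)
  have hble : b ≤ 0 := by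
    rw [hbdef]
    refine Finset.sum_nonpos (fun x _ => ?_)
    split_ifs
    · exact le_refl 0
    · exact hdle x
  have hminus : a - (∑ y : V, d y) = -b := by rw [← hab]; ring
  have hb' : |(-b)| = ∑ x : V, if (Ged G hd tl e).Reachable (hd e) x then 0 else |d x| := by
    rw [abs_of_nonneg (neg_nonneg.mpr hble), hbdef, ← Finset.sum_neg_distrib]
    refine Finset.sum_congr rfl (fun x _ => ?_)
    split_ifs
    · simp
    · rw [abs_of_nonpos (hdle x)]
  have ha' : |a| = ∑ x : V, if (Ged G hd tl e).Reachable (hd e) x then |d x| else 0 :=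
    abs_cut d hdle (fun x => (Ged G hd tl e).Reachable (hd e) x)
  have hconngen : ∀ (y0 x : V), ¬ (Ged G hd tl e).Reachable y0 v →
      (Ged G hd tl e).Reachable y0 x → ∀ (hx : x ≠ v) (hy : y0 ≠ v),
      (G.induce {z | z ≠ v}).Reachable ⟨y0, hy⟩ ⟨x, hx⟩ := by
    intro y0 x hnv hr hxv hyv
    obtain ⟨p⟩ := hr
    have hsup : ∀ y ∈ p.support, y ≠ v := by
      intro y hy hyv'
      exact hnv (hyv' ▸ ⟨p.takeUntil y hy⟩)
    exact reach_induce (SimpleGraph.deleteEdges_le _) p hsup hyv hxv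
  by_cases hSv : (Ged G hd tl e).Reachable (hd e) v
    <;> by_cases hSw : (Ged G hd tl e).Reachable (hd e) w
  · rw [if_pos hSv, if_pos hSw]
  · rw [if_pos hSv, if_neg hSw, sub_zero, hminus, hb', ha']
    have hvT : ¬ (Ged G hd tl e).Reachable (tl e) v :=
      fun h => ged_not_both hd tl hadj hT e v ⟨h, hSv⟩
    have hms := median_side G d v hv (fun x => (Ged G hd tl e).Reachable (tl e) x) (tl e)
      (SimpleGraph.Reachable.refl _) hvT (fun x hx hxv hyv => hconngen (tl e) x hvT hx hxv hyv)
    calc (∑ x : V, if (Ged G hd tl e).Reachable (hd e) x then 0 else |d x|)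
        = ∑ x : V, if (Ged G hd tl e).Reachable (tl e) x then |d x| else 0 := by
          refine Finset.sum_congr rfl (fun x _ => ?_)
          by_cases hq : (Ged G hd tl e).Reachable (hd e) x
          · rw [if_pos hq, if_neg (fun h => ged_not_both hd tl hadj hT e x ⟨h, hq⟩)]
          · rcases ged_cover hd tl hT e x with h1 | h1
            · rw [if_neg hq, if_pos h1]
            · exact absurd h1 hq
      _ ≤ ∑ x : V, if (Ged G hd tl e).Reachable (tl e) x then 0 else |d x| := hms
      _ = ∑ x : V, if (Ged G hd tl e).Reachable (hd e) x then |d x| else 0 := by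
          refine Finset.sum_congr rfl (fun x _ => ?_)
          by_cases hq : (Ged G hd tl e).Reachable (hd e) x
          · rw [if_pos hq, if_neg (fun h => ged_not_both hd tl hadj hT e x ⟨h, hq⟩)]
          · rcases ged_cover hd tl hT e x with h1 | h1
            · rw [if_neg hq, if_pos h1]
            · exact absurd h1 hq
  · rw [if_neg hSv, if_pos hSw, sub_zero, hminus, hb', ha']
    exact median_side G d v hv (fun x => (Ged G hd tl e).Reachable (hd e) x) (hd e)
      (SimpleGraph.Reachable.refl _) hSv (fun x hx hxv hyv => hconngen (hd e) x hSv hx hxv hyv)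
  · rw [if_neg hSv, if_neg hSw]

end MainProof
end

section
/- Let d be a supply vector on a capacitated undirected graph G=(V,E,c) whose source set S satisfies |S|>1, let θ be a real number with θ ≥ |S| (so θ ≥ 2), and let w ∈ argmax_{v∈V} |d(v)| be a master source of d. Then for every vertex u∈V and every flow f satisfying the demand vector d∘u, there exists a flow f' with |f'(e)| ≤ |f(e)| for every edge e that satisfies the demand vector (1/(θ−1))·(d∘w). -/
open Finset

namespace MSL

set_option linter.unusedSectionVars false

variable {V E : Type*} [Fintype V] [Fintype E] [DecidableEq V]

/-- Divergence (net inflow) of a flow at a vertex. -/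
def Div (hd tl : E → V) (g : E → ℝ) (v : V) : ℝ :=
  (∑ e : E, if hd e = v then g e else 0) - (∑ e : E, if tl e = v then g e else 0)

lemma Div_combo (hd tl : E → V) (g h : E → ℝ) (a b : ℝ) (v : V) :
    Div hd tl (fun e => a * g e - b * h e) v
      = a * Div hd tl g v - b * Div hd tl h v := by
  have key : ∀ p : E → V, (∑ e : E, if p e = v then a * g e - b * h e else 0)
      = a * (∑ e : E, if p e = v then g e else 0)
        - b * (∑ e : E, if p e = v then h e else 0) := by
    intro p
    rw [Finset.mul_sum, Finset.mul_sum, ← Finset.sum_sub_distrib]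
    apply Finset.sum_congr rfl; intro e _; split <;> ring
  simp only [Div, key hd, key tl]; ring

lemma Div_add (hd tl : E → V) (g h : E → ℝ) (v : V) :
    Div hd tl (fun e => g e + h e) v = Div hd tl g v + Div hd tl h v := by
  have key : ∀ p : E → V, (∑ e : E, if p e = v then g e + h e else 0)
      = (∑ e : E, if p e = v then g e else 0) + (∑ e : E, if p e = v then h e else 0) := by
    intro p
    rw [← Finset.sum_add_distrib]
    apply Finset.sum_congr rfl; intro e _; split <;> ring
  simp only [Div, key hd, key tl]; ring

lemma Div_smul (hd tl : E → V) (g : E → ℝ) (a : ℝ) (v : V) :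
    Div hd tl (fun e => a * g e) v = a * Div hd tl g v := by
  simp only [Div, Finset.mul_sum, mul_ite, mul_zero, mul_sub]

lemma Div_zero (hd tl : E → V) (v : V) :
    Div hd tl (fun _ => (0:ℝ)) v = 0 := by
  simp [Div]

lemma Div_single [DecidableEq E] (hd tl : E → V) (e₀ : E) (c : ℝ) (v : V) :
    Div hd tl (fun e => if e = e₀ then c else 0) v
      = (if hd e₀ = v then c else 0) - (if tl e₀ = v then c else 0) := by
  simp only [Div]
  congr 1 <;>
  · rw [Finset.sum_eq_single e₀]
    · simp
    · intro b _ hb; simp [hb]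
    · simp

lemma sum_Div (hd tl : E → V) (g : E → ℝ) (R : Finset V) :
    ∑ v ∈ R, Div hd tl g v
      = ∑ e : E, ((if hd e ∈ R then g e else 0) - (if tl e ∈ R then g e else 0)) := by
  simp only [Div, Finset.sum_sub_distrib]
  congr 1 <;>
  · rw [Finset.sum_comm]
    apply Finset.sum_congr rfl; intro e _
    exact Finset.sum_ite_eq R _ (fun _ => g e)


/-- One step along an edge in the direction of the flow `g`. -/
def stepRel (hd tl : E → V) (g : E → ℝ) (x y : V) : Prop :=
  ∃ e, (0 < g e ∧ tl e = x ∧ hd e = y) ∨ (g e < 0 ∧ hd e = x ∧ tl e = y)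

lemma reach (hd tl : E → V) (g : E → ℝ) (u w : V)
    (hneg : Div hd tl g w < 0)
    (hle : ∀ v, v ≠ u → Div hd tl g v ≤ 0) :
    Relation.ReflTransGen (stepRel hd tl g) w u := by
  classical
  by_contra hcon
  set R : Finset V := univ.filter (fun v => Relation.ReflTransGen (stepRel hd tl g) w v) with hR
  have hwR : w ∈ R := by simp [hR]; exact Relation.ReflTransGen.refl
  have huR : u ∉ R := by simp [hR, hcon]
  have hclosed : ∀ x y, x ∈ R → stepRel hd tl g x y → y ∈ R := by
    intro x y hx hxy
    simp only [hR, mem_filter, mem_univ, true_and] at hx ⊢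
    exact hx.tail hxy
  -- each edge term in sum_Div is nonneg
  have hterm : ∀ e : E,
      0 ≤ (if hd e ∈ R then g e else 0) - (if tl e ∈ R then g e else 0) := by
    intro e
    by_cases h1 : hd e ∈ R <;> by_cases h2 : tl e ∈ R <;> simp [h1, h2]
    · -- hd ∈ R, tl ∉ R : term = g e; if g e < 0 then tl reachable from hd
      by_contra hlt
      push_neg at hlt
      exact h2 (hclosed _ _ h1 ⟨e, Or.inr ⟨hlt, rfl, rfl⟩⟩)
    · -- tl ∈ R, hd ∉ R : term = -g e ≥ 0 i.e. g e ≤ 0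
      by_contra hlt
      push_neg at hlt
      exact h1 (hclosed _ _ h2 ⟨e, Or.inl ⟨hlt, rfl, rfl⟩⟩)
  have hsum : 0 ≤ ∑ v ∈ R, Div hd tl g v := by
    rw [sum_Div]
    exact Finset.sum_nonneg fun e _ => hterm e
  have hsum' : ∑ v ∈ R, Div hd tl g v < 0 := by
    have h1 : ∑ v ∈ R.erase w, Div hd tl g v ≤ 0 := by
      apply Finset.sum_nonpos
      intro v hv
      refine hle v ?_
      rintro rfl
      exact huR (Finset.mem_of_mem_erase hv)
    have h2 := Finset.add_sum_erase R (Div hd tl g) hwR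
    have hwu : w ≠ u := by rintro rfl; exact huR hwR
    linarith
  linarith

/-- From a directed walk in the support of `g` extract an integer-multiplicity
walk flow conforming to `g`. -/
lemma exists_walk_flow (hd tl : E → V) (g : E → ℝ) {x u : V}
    (hr : Relation.ReflTransGen (stepRel hd tl g) x u) :
    ∃ m : E → ℝ,
      (∀ v, Div hd tl m v = (if u = v then 1 else 0) - (if x = v then 1 else 0)) ∧
      (∀ e, 0 < g e → 0 ≤ m e) ∧ (∀ e, g e < 0 → m e ≤ 0) ∧
      (∀ e, g e = 0 → m e = 0) := by
  classical
  induction hr using Relation.ReflTransGen.head_induction_on with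
  | refl =>
      exact ⟨fun _ => 0, fun v => by simp [Div_zero], fun e _ => le_refl _,
        fun e _ => le_refl _, fun e _ => rfl⟩
  | head hstep _ ih =>
      rename_i x' y' _
      obtain ⟨m, hm, hp, hn, hz⟩ := ih
      obtain ⟨e₀, he₀⟩ := hstep
      rcases he₀ with ⟨hpos, htl, hhd⟩ | ⟨hneg, hhd, htl⟩
      · refine ⟨fun e => m e + (if e = e₀ then 1 else 0), ?_, ?_, ?_, ?_⟩
        · intro v
          rw [Div_add, hm v, Div_single, htl, hhd]
          by_cases h1 : y' = v <;> by_cases h2 : x' = v <;> by_cases h3 : u = v <;>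
            simp [h1, h2, h3] <;> ring
        · intro e he
          by_cases h : e = e₀
          · subst h; have := hp e he; simp; linarith
          · simp [h]; exact hp e he
        · intro e he
          have hne : e ≠ e₀ := by rintro rfl; linarith
          simp [hne]; exact hn e he
        · intro e he
          have hne : e ≠ e₀ := by rintro rfl; simp [he] at hpos
          simp [hne]; exact hz e he
      · refine ⟨fun e => m e + (if e = e₀ then (-1:ℝ) else 0), ?_, ?_, ?_, ?_⟩
        · intro v
          rw [Div_add, hm v, Div_single, htl, hhd]
          by_cases h1 : y' = v <;> by_cases h2 : x' = v <;> by_cases h3 : u = v <;>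
            simp [h1, h2, h3] <;> ring
        · intro e he
          have hne : e ≠ e₀ := by rintro rfl; linarith
          simp [hne]; exact hp e he
        · intro e he
          by_cases h : e = e₀
          · subst h; have := hn e he; simp; linarith
          · simp [h]; exact hn e he
        · intro e he
          have hne : e ≠ e₀ := by rintro rfl; simp [he] at hneg
          simp [hne]; exact hz e he

lemma extract (hd tl : E → V) {u w : V} (hwu : w ≠ u) :
    ∀ n : ℕ, ∀ g : E → ℝ, (univ.filter (fun e => g e ≠ 0)).card ≤ n →
    (∀ v, v ≠ u → Div hd tl g v ≤ 0) →
    ∀ F : ℝ, 0 < F → F ≤ -Div hd tl g w →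
    ∃ h : E → ℝ, (∀ e, (0 ≤ h e ∧ h e ≤ g e) ∨ (g e ≤ h e ∧ h e ≤ 0)) ∧
      ∀ v, Div hd tl h v = F * ((if u = v then 1 else 0) - (if w = v then 1 else 0)) := by
  classical
  intro n
  induction n with
  | zero =>
      intro g hcard hle F hF hFle
      exfalso
      have hg : ∀ e, g e = 0 := by
        intro e
        by_contra he
        have : e ∈ univ.filter (fun e => g e ≠ 0) := by simp [he]
        have := Finset.card_pos.mpr ⟨e, this⟩
        omega
      have : g = fun _ => (0:ℝ) := funext hg
      rw [this, Div_zero] at hFle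
      linarith
  | succ n ih =>
      intro g hcard hle F hF hFle
      have hDw : Div hd tl g w < 0 := by linarith
      obtain ⟨m, hm, hp, hn, hz⟩ := exists_walk_flow hd tl g (reach hd tl g u w hDw hle)
      -- m is nonzero somewhere
      have hmne : ∃ e, m e ≠ 0 := by
        by_contra hall
        push_neg at hall
        have : m = fun _ => (0:ℝ) := funext hall
        have h1 := hm u
        rw [this, Div_zero] at h1
        simp [hwu] at h1
      have hsuppne : (univ.filter (fun e => m e ≠ 0)).Nonempty := by
        obtain ⟨e, he⟩ := hmne; exact ⟨e, by simp [he]⟩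
      obtain ⟨e₀, he₀mem, he₀min⟩ :=
        Finset.exists_min_image (univ.filter (fun e => m e ≠ 0))
          (fun e => |g e| / |m e|) hsuppne
      have hme₀ : m e₀ ≠ 0 := by simpa using he₀mem
      have hge₀ : g e₀ ≠ 0 := fun h => hme₀ (hz e₀ h)
      have hq0 : 0 < |g e₀| / |m e₀| :=
        div_pos (abs_pos.mpr hge₀) (abs_pos.mpr hme₀)
      -- conforming key lemma
      have key : ∀ c : ℝ, 0 ≤ c → (∀ e, m e ≠ 0 → c ≤ |g e| / |m e|) →
          ∀ e, (0 ≤ c * m e ∧ c * m e ≤ g e) ∨ (g e ≤ c * m e ∧ c * m e ≤ 0) := by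
        intro c hc hcq e
        by_cases hme : m e = 0
        · rcases le_or_gt 0 (g e) with hge | hge
          · left; simp [hme, hge]
          · right; simp [hme, le_of_lt hge]
        · have hq := hcq e hme
          have habs : c * |m e| ≤ |g e| :=
            (le_div_iff₀ (abs_pos.mpr hme)).mp hq
          have hge : g e ≠ 0 := fun h => hme (hz e h)
          rcases lt_trichotomy (g e) 0 with hneg | hzero | hpos
          · have hm1 : m e ≤ 0 := hn e hneg
            rw [abs_of_nonpos hm1, abs_of_neg hneg, mul_neg] at habs
            right
            constructor
            · linarith
            · have : 0 ≤ c * (-m e) := mul_nonneg hc (by linarith)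
              rw [mul_neg] at this; linarith
          · exact absurd hzero hge
          · have hm1 : 0 ≤ m e := hp e hpos
            rw [abs_of_nonneg hm1, abs_of_pos hpos] at habs
            left
            exact ⟨mul_nonneg hc hm1, habs⟩
      by_cases hcase : F ≤ |g e₀| / |m e₀|
      · -- take h = F • m directly
        refine ⟨fun e => F * m e, ?_, ?_⟩
        · apply key F (le_of_lt hF)
          intro e hme
          exact le_trans hcase (he₀min e (by simp [hme]))
        · intro v
          rw [Div_smul, hm v]
      · push_neg at hcase
        set c : ℝ := |g e₀| / |m e₀| with hcdef
        have hc0 : 0 < c := hq0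
        have hcF : c < F := hcase
        have hcq : ∀ e, m e ≠ 0 → c ≤ |g e| / |m e| := by
          intro e hme; exact he₀min e (by simp [hme])
        have hcm := key c (le_of_lt hc0) hcq
        set g' : E → ℝ := fun e => g e - c * m e with hg'def
        -- g' e₀ = 0
        have hce₀ : c * m e₀ = g e₀ := by
          rcases lt_trichotomy (g e₀) 0 with hneg | hzero | hpos
          · have hm1 : m e₀ < 0 := lt_of_le_of_ne (hn e₀ hneg) hme₀
            rw [hcdef, abs_of_neg hneg, abs_of_neg hm1]
            field_simp
          · exact absurd hzero hge₀
          · have hm1 : 0 < m e₀ := lt_of_le_of_ne (hp e₀ hpos) (Ne.symm hme₀)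
            rw [hcdef, abs_of_pos hpos, abs_of_pos hm1]
            field_simp
        have hg'e₀ : g' e₀ = 0 := by rw [hg'def]; simp [hce₀]
        -- Div of g'
        have hDg' : ∀ v, Div hd tl g' v
            = Div hd tl g v - c * ((if u = v then 1 else 0) - (if w = v then 1 else 0)) := by
          intro v
          have : g' = fun e => 1 * g e - c * m e := by funext e; rw [hg'def]; ring
          rw [this, Div_combo, hm v, one_mul]
        -- support shrinks
        have hsub : (univ.filter (fun e => g' e ≠ 0)) ⊂ (univ.filter (fun e => g e ≠ 0)) := by
          constructor
          · intro e he
            simp only [mem_filter, mem_univ, true_and] at he ⊢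
            intro hge
            have hme : m e = 0 := hz e hge
            apply he
            rw [hg'def]; simp [hge, hme]
          · intro hsub'
            have h1 : e₀ ∈ univ.filter (fun e => g e ≠ 0) := by simp [hge₀]
            have h2 := hsub' h1
            simp [hg'e₀] at h2
        have hcard' : (univ.filter (fun e => g' e ≠ 0)).card ≤ n := by
          have := Finset.card_lt_card hsub
          omega
        have hle' : ∀ v, v ≠ u → Div hd tl g' v ≤ 0 := by
          intro v hv
          rw [hDg' v]
          have huv : ¬ u = v := fun h => hv h.symm
          by_cases hvw : w = v
          · subst hvw
            have hDw' := hle w hwu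
            rw [if_neg huv, if_pos rfl]
            linarith
          · simp only [huv, hvw, if_false]
            have := hle v hv
            linarith
        have hDg'w : F - c ≤ -Div hd tl g' w := by
          rw [hDg' w]
          rw [if_neg (fun h => hwu h.symm : ¬ u = w), if_pos rfl]
          linarith
        obtain ⟨h', hconf', hdiv'⟩ := ih g' hcard' hle' (F - c) (by linarith) hDg'w
        have hg'e : ∀ e, g' e = g e - c * m e := fun e => rfl
        refine ⟨fun e => c * m e + h' e, ?_, ?_⟩
        · intro e
          have h5 := hg'e e
          beta_reduce
          rcases hcm e with ⟨h1, h2⟩ | ⟨h1, h2⟩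
          · left
            rcases hconf' e with ⟨h3, h4⟩ | ⟨h3, h4⟩ <;> constructor <;> linarith
          · right
            rcases hconf' e with ⟨h3, h4⟩ | ⟨h3, h4⟩ <;> constructor <;> linarith
        · intro v
          have hadd := Div_add hd tl (fun e => c * m e) h' v
          rw [hadd, Div_smul, hm v, hdiv' v]
          ring

end MSL

open MSL

/-- Lemma (master source): let `d` be a supply vector with source set
`S = {v | d v < 0}` of size `> 1`, let `θ ≥ |S|` and let `w` be a master source of
`d` (a vertex maximizing `|d v|`). Then for any vertex `u` and any flow `f`
satisfying `d ∘ u`, there is a flow `f'` edgewise dominated by `f` that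
satisfies `(1/(θ-1)) • (d ∘ w)`. -/
theorem master_source_lemma {V E : Type*} [Fintype V] [Fintype E] [DecidableEq V]
    (hd tl : E → V) (c : E → ℝ) (hc : ∀ e, 0 ≤ c e)
    (d : V → ℝ) (hdle : ∀ v, d v ≤ 0)
    (hcard : 1 < (univ.filter (fun v => d v < 0)).card)
    (θ : ℝ) (hθ : ((univ.filter (fun v => d v < 0)).card : ℝ) ≤ θ)
    (w : V) (hw : ∀ v, |d v| ≤ |d w|)
    (u : V) (f : E → ℝ) (hf : satisfiesFlow hd tl f (assign d u)) :
    ∃ f' : E → ℝ, (∀ e, |f' e| ≤ |f e|) ∧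
      satisfiesFlow hd tl f' (fun v => (1 / (θ - 1)) * assign d w v) := by
  classical
  set S : Finset V := univ.filter (fun v => d v < 0) with hS
  -- basic facts
  obtain ⟨v₀, hv₀S⟩ := Finset.card_pos.mp (by omega : 0 < S.card)
  have hv₀ : d v₀ < 0 := by simpa [hS] using hv₀S
  have hdw : d w < 0 := by
    have h1 : 0 < |d w| := lt_of_lt_of_le (abs_pos.mpr (ne_of_lt hv₀)) (hw v₀)
    rcases lt_or_eq_of_le (hdle w) with h | h
    · exact h
    · rw [h] at h1; simp at h1
  have hwS : w ∈ S := by simp [hS, hdw]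
  have hθ2 : (2:ℝ) ≤ θ := by
    have : (2:ℝ) ≤ (S.card : ℝ) := by exact_mod_cast hcard
    linarith
  have hθ1 : (0:ℝ) < θ - 1 := by linarith
  set l : ℝ := 1 / (θ - 1) with hl
  have hl0 : 0 < l := by positivity
  have hl1 : l ≤ 1 := by rw [hl]; rw [div_le_one hθ1]; linarith
  have hfD : ∀ v, assign d u v = Div hd tl f v := hf
  by_cases huw : u = w
  · -- trivial case: scale f
    subst huw
    refine ⟨fun e => l * f e, ?_, ?_⟩
    · intro e
      rw [abs_mul, abs_of_pos hl0]
      nlinarith [abs_nonneg (f e)]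
    · intro v
      show l * assign d u v = _
      have := Div_smul hd tl f l v
      rw [show ((∑ e : E, if hd e = v then l * f e else 0)
          - (∑ e : E, if tl e = v then l * f e else 0)) = Div hd tl (fun e => l * f e) v from rfl,
        this, ← hfD v]
  · have hwu : w ≠ u := fun h => huw h.symm
    set T : ℝ := ∑ v : V, d v with hT
    -- divergence facts for f
    have hle : ∀ v, v ≠ u → Div hd tl f v ≤ 0 := by
      intro v hv
      rw [← hfD v]
      simp only [assign, if_neg hv]
      exact hdle v
    have hDivw : Div hd tl f w = d w := by
      rw [← hfD w]; simp [assign, hwu]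
    set F : ℝ := -d w with hF
    have hF0 : 0 < F := by rw [hF]; linarith
    obtain ⟨h, hconf, hdiv⟩ := extract hd tl hwu
      (univ.filter (fun e => f e ≠ 0)).card f le_rfl hle F hF0 (by rw [hDivw])
    -- constants
    set κ : ℝ := l * T / d w with hκ
    have hTdw : T ≤ d w := by
      have : ∑ v ∈ univ.erase w, d v ≤ 0 :=
        Finset.sum_nonpos (fun v _ => hdle v)
      have h2 : d w + ∑ v ∈ univ.erase w, d v = T := by
        rw [hT, Finset.add_sum_erase univ d (Finset.mem_univ w)]
      linarith
    have hT0 : T < 0 := lt_of_le_of_lt hTdw hdw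
    -- the key sum bound : ∑_{v ≠ w} (-d v) ≤ (θ-1) * (-d w)
    have hsum : ∑ v ∈ univ.erase w, (-d v) ≤ (θ - 1) * (-d w) := by
      have hsub : S.erase w ⊆ univ.erase w :=
        Finset.erase_subset_erase w (Finset.subset_univ S)
      have hzero : ∀ v ∈ univ.erase w, v ∉ S.erase w → -d v = 0 := by
        intro v hv hvn
        have hvw : v ≠ w := Finset.ne_of_mem_erase hv
        have : v ∉ S := fun hvS => hvn (Finset.mem_erase.mpr ⟨hvw, hvS⟩)
        have : ¬ d v < 0 := by simpa [hS] using this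
        have := hdle v
        linarith
      rw [← Finset.sum_subset hsub hzero]
      have hbound : ∑ v ∈ S.erase w, (-d v) ≤ ((S.erase w).card : ℝ) * (-d w) := by
        have hstep := Finset.sum_le_card_nsmul (S.erase w) (fun v => -d v) (-d w)
          (fun v _ => by
            have hv := hw v
            rwa [abs_of_nonpos (hdle v), abs_of_nonpos (hdle w)] at hv)
        simpa [nsmul_eq_mul] using hstep
      have hcarde : ((S.erase w).card : ℝ) = (S.card : ℝ) - 1 := by
        rw [Finset.card_erase_of_mem hwS]
        have h1 : 1 ≤ S.card := by omega
        push_cast [Nat.cast_sub h1]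
        ring
      have hcle : ((S.erase w).card : ℝ) ≤ θ - 1 := by rw [hcarde]; linarith
      calc ∑ v ∈ S.erase w, (-d v) ≤ ((S.erase w).card : ℝ) * (-d w) := hbound
        _ ≤ (θ - 1) * (-d w) := mul_le_mul_of_nonneg_right hcle (by linarith)
    -- bound κ
    have hdwne : d w ≠ 0 := ne_of_lt hdw
    have hκF : κ * F = -(l * T) := by
      rw [hκ, hF, div_mul_eq_mul_div, div_eq_iff hdwne]; ring
    have hκl : l ≤ κ := by
      rw [hκ, le_div_iff_of_neg hdw]
      exact mul_le_mul_of_nonneg_left hTdw (le_of_lt hl0)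
    have hκ0 : 0 ≤ κ := le_trans (le_of_lt hl0) hκl
    have hlθ : l * (θ - 1) = 1 := by rw [hl]; field_simp
    have hκ1 : κ ≤ 1 + l := by
      have h1 : T - d w = ∑ v ∈ univ.erase w, d v := by
        rw [hT, ← Finset.add_sum_erase univ d (Finset.mem_univ w)]; ring
      have h2 : d w - T ≤ (θ - 1) * (-d w) := by
        have h2' := hsum
        rw [Finset.sum_neg_distrib, ← h1] at h2'
        linarith
      have h3 : l * (d w - T) ≤ l * ((θ - 1) * (-d w)) :=
        mul_le_mul_of_nonneg_left h2 (le_of_lt hl0)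
      have h4 : l * ((θ - 1) * (-d w)) = -d w := by
        rw [← mul_assoc, hlθ, one_mul]
      have h5 : (1 + l) * d w ≤ l * T := by nlinarith [h3, h4]
      rw [hκ, div_le_iff_of_neg hdw]
      exact h5
    have hκl1 : κ - l ≤ 1 := by linarith
    -- define f'
    refine ⟨fun e => l * f e - κ * h e, ?_, ?_⟩
    · intro e
      show |l * f e - κ * h e| ≤ |f e|
      rcases hconf e with ⟨h1, h2⟩ | ⟨h1, h2⟩
      · have hfe : 0 ≤ f e := le_trans h1 h2
        have ha : l * f e ≤ 1 * f e := mul_le_mul_of_nonneg_right hl1 hfe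
        have hb : 0 ≤ κ * h e := mul_nonneg hκ0 h1
        have hc' : κ * h e ≤ (1 + l) * h e := mul_le_mul_of_nonneg_right hκ1 h1
        have hd' : l * h e ≤ l * f e := mul_le_mul_of_nonneg_left h2 (le_of_lt hl0)
        rw [abs_of_nonneg hfe, abs_le]
        constructor <;> linarith
      · have hfe : f e ≤ 0 := le_trans h1 h2
        have ha : 1 * f e ≤ l * f e := mul_le_mul_of_nonpos_right hl1 hfe
        have hb : κ * h e ≤ 0 := mul_nonpos_iff.mpr (Or.inl ⟨hκ0, h2⟩)
        have hc' : (1 + l) * h e ≤ κ * h e := mul_le_mul_of_nonpos_right hκ1 h2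
        have hd' : l * f e ≤ l * h e := mul_le_mul_of_nonneg_left h1 (le_of_lt hl0)
        rw [abs_of_nonpos hfe, abs_le]
        constructor <;> linarith
    · intro v
      show l * assign d w v = _
      rw [show ((∑ e : E, if hd e = v then l * f e - κ * h e else 0)
          - (∑ e : E, if tl e = v then l * f e - κ * h e else 0))
          = Div hd tl (fun e => l * f e - κ * h e) v from rfl,
        Div_combo, ← hfD v, hdiv v]
      by_cases hvw : v = w
      · subst hvw
        have herase : ∑ x ∈ univ.erase v, d x = T - d v := by
          rw [hT, ← Finset.add_sum_erase univ d (Finset.mem_univ v)]; ring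
        simp only [assign, if_pos rfl, if_neg (fun hh => hwu hh.symm : ¬ u = v),
          if_neg hwu, herase, if_true]
        linarith [hκF]
      · by_cases hvu : v = u
        · subst hvu
          have herase : ∑ x ∈ univ.erase v, d x = T - d v := by
            rw [hT, ← Finset.add_sum_erase univ d (Finset.mem_univ v)]; ring
          simp only [assign, if_pos rfl, if_neg hvw, if_neg (fun hh => hvw hh.symm : ¬ w = v), if_true,
            herase]
          linarith [hκF]
        · simp only [assign, if_neg hvw, if_neg hvu,
            if_neg (fun hh => hvu hh.symm : ¬ u = v), if_neg (fun hh => hvw hh.symm : ¬ w = v)]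
          ring
end

section
/- Let s_1,…,s_k be supply vectors on a capacitated undirected graph G=(V,E,c), let θ = max_{1≤i≤k} |{v∈V : s_i(v)<0}| be the largest number of sources of any supply vector, and for each i let w_i ∈ argmax_{v∈V} |s_i(v)| be a master source of s_i. Then λ(G; s_1∘w_1,…,s_k∘w_k) ≥ λ(G; s_1,…,s_k) / max{θ−1, 1}; that is, choosing master sources as targets is a max{θ−1,1}-approximate solution. -/
open Finset

section AuxLoMuF
set_option linter.unusedSectionVars false

variable {V E : Type*} [Fintype E] [DecidableEq V] [DecidableEq E]

def netF (hd tl : E → V) (f : E → ℝ) (x : V) : ℝ :=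
  (∑ e : E, if hd e = x then f e else 0) - (∑ e : E, if tl e = x then f e else 0)

noncomputable def mySign (x : ℝ) : ℝ := if x < 0 then -1 else 1

lemma mySign_pos {x : ℝ} (h : 0 < x) : mySign x = 1 := by
  simp [mySign, not_lt.mpr h.le]

lemma mySign_neg {x : ℝ} (h : x < 0) : mySign x = -1 := by
  simp [mySign, h]

lemma mySign_mul {x : ℝ} (h : x ≠ 0) : mySign x * x = |x| := by
  rcases lt_or_gt_of_ne h with h' | h'
  · rw [mySign_neg h', abs_of_neg h']; ring
  · rw [mySign_pos h', abs_of_pos h']; ring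

/-- The "unit walk flow" of a list of edges: each edge carries its multiplicity
in the flow direction of `f`. -/
noncomputable def pF (f : E → ℝ) (L : List E) (e : E) : ℝ :=
  (L.count e : ℝ) * mySign (f e)

lemma pF_nil (f : E → ℝ) : pF f ([] : List E) = fun _ => 0 := by
  funext e; simp [pF]

lemma pF_cons (f : E → ℝ) (e : E) (L : List E) :
    pF f (e :: L) = fun e' => pF f L e' + (if e' = e then mySign (f e) else 0) := by
  funext e'
  simp only [pF, List.count_cons]
  by_cases h : e' = e
  · subst h; simp; push_cast; ring
  · simp [h, Ne.symm h]

/-- `FWalk hd tl f v u L`: `L` is a walk from `u` to `v` along edges in the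
direction of positive flow of `f`. -/
def FWalk (hd tl : E → V) (f : E → ℝ) (v : V) : V → List E → Prop
  | u, [] => u = v
  | u, e :: L => (0 < f e ∧ tl e = u ∧ FWalk hd tl f v (hd e) L) ∨
      (f e < 0 ∧ hd e = u ∧ FWalk hd tl f v (tl e) L)

lemma fwalk_ne_zero {hd tl : E → V} {f : E → ℝ} {v u : V} {L : List E}
    (hL : FWalk hd tl f v u L) {e : E} (he : e ∈ L) : f e ≠ 0 := by
  induction L generalizing u with
  | nil => simp at he
  | cons e' L ih =>
    rcases List.mem_cons.mp he with rfl | he'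
    · rcases hL with ⟨h1, _, _⟩ | ⟨h1, _, _⟩
      · exact ne_of_gt h1
      · exact ne_of_lt h1
    · rcases hL with ⟨_, _, h3⟩ | ⟨_, _, h3⟩
      · exact ih h3 he'
      · exact ih h3 he'

lemma netF_add (hd tl : E → V) (f g : E → ℝ) (x : V) :
    netF hd tl (fun e => f e + g e) x = netF hd tl f x + netF hd tl g x := by
  simp only [netF]
  rw [show (∑ e : E, if hd e = x then f e + g e else 0)
      = (∑ e : E, ((if hd e = x then f e else 0) + (if hd e = x then g e else 0))) by
      apply Finset.sum_congr rfl; intro e _; split <;> simp,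
    show (∑ e : E, if tl e = x then f e + g e else 0)
      = (∑ e : E, ((if tl e = x then f e else 0) + (if tl e = x then g e else 0))) by
      apply Finset.sum_congr rfl; intro e _; split <;> simp,
    Finset.sum_add_distrib, Finset.sum_add_distrib]
  ring

lemma netF_smul (hd tl : E → V) (a : ℝ) (f : E → ℝ) (x : V) :
    netF hd tl (fun e => a * f e) x = a * netF hd tl f x := by
  simp only [netF]
  rw [show (∑ e : E, if hd e = x then a * f e else 0)
      = a * (∑ e : E, if hd e = x then f e else 0) by
      rw [Finset.mul_sum]; apply Finset.sum_congr rfl; intro e _; split <;> simp,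
    show (∑ e : E, if tl e = x then a * f e else 0)
      = a * (∑ e : E, if tl e = x then f e else 0) by
      rw [Finset.mul_sum]; apply Finset.sum_congr rfl; intro e _; split <;> simp]
  ring

lemma netF_single (hd tl : E → V) (e : E) (a : ℝ) (x : V) :
    netF hd tl (fun e' => if e' = e then a else 0) x
      = (if hd e = x then a else 0) - (if tl e = x then a else 0) := by
  simp only [netF]
  have h1 : ∀ (g : E → V), (∑ e' : E, if g e' = x then (if e' = e then a else 0) else 0)
      = if g e = x then a else 0 := by
    intro g
    rw [show (∑ e' : E, if g e' = x then (if e' = e then a else 0) else 0)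
        = ∑ e' : E, if e' = e then (if g e' = x then a else 0) else 0 by
      apply Finset.sum_congr rfl; intro e' _
      by_cases h : e' = e <;> by_cases h2 : g e' = x <;> simp [h, h2]]
    simp [Finset.sum_ite_eq' univ e]
  rw [h1 hd, h1 tl]

lemma fwalk_netF {hd tl : E → V} {f : E → ℝ} {v : V} :
    ∀ {u : V} {L : List E}, FWalk hd tl f v u L → ∀ x : V,
      netF hd tl (pF f L) x = (if v = x then 1 else 0) - (if u = x then 1 else 0) := by
  intro u L
  induction L generalizing u with
  | nil =>
    intro hL x
    obtain rfl : u = v := hL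
    rw [pF_nil]
    simp [netF]
  | cons e L ih =>
    intro hL x
    rw [pF_cons, netF_add, netF_single]
    rcases hL with ⟨h1, h2, h3⟩ | ⟨h1, h2, h3⟩
    · rw [ih h3 x, mySign_pos h1, h2]
      by_cases hv : v = x <;> by_cases hh : hd e = x <;> by_cases hu : u = x <;>
        simp [hv, hh, hu] <;> ring
    · rw [ih h3 x, mySign_neg h1, h2]
      by_cases hv : v = x <;> by_cases ht : tl e = x <;> by_cases hu : u = x <;>
        simp [hv, ht, hu] <;> ring

lemma exists_fwalk [Fintype V] {hd tl : E → V} {f : E → ℝ} {v w : V}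
    (hneg : ∀ u, u ≠ v → netF hd tl f u ≤ 0) (hw : netF hd tl f w < 0) :
    ∃ L, FWalk hd tl f v w L := by
  classical
  set step : V → V → Prop := fun u u' => ∃ e, (0 < f e ∧ tl e = u ∧ hd e = u') ∨
    (f e < 0 ∧ hd e = u ∧ tl e = u') with hstep
  -- from reachability to a walk
  have key : Relation.ReflTransGen step w v → ∃ L, FWalk hd tl f v w L := by
    clear hw hneg
    intro hr
    induction hr using Relation.ReflTransGen.head_induction_on with
    | refl => exact ⟨[], rfl⟩
    | head hab _ ih =>
      obtain ⟨L, hL⟩ := ih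
      obtain ⟨e, he⟩ := hab
      rcases he with ⟨h1, h2, h3⟩ | ⟨h1, h2, h3⟩
      · exact ⟨e :: L, Or.inl ⟨h1, h2, h3 ▸ hL⟩⟩
      · exact ⟨e :: L, Or.inr ⟨h1, h2, h3 ▸ hL⟩⟩
  apply key
  by_contra hnr
  set R : Finset V := univ.filter (fun x => Relation.ReflTransGen step w x) with hR
  have hwR : w ∈ R := by simp [hR, Relation.ReflTransGen.refl]
  have hvR : v ∉ R := by simp [hR, hnr]
  have hclosed : ∀ u u', step u u' → u ∈ R → u' ∈ R := by
    intro u u' hs hu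
    simp only [hR, mem_filter, mem_univ, true_and] at hu ⊢
    exact hu.tail hs
  have hSnonneg : 0 ≤ ∑ x ∈ R, netF hd tl f x := by
    have hsum : ∑ x ∈ R, netF hd tl f x
        = ∑ e : E, ((if hd e ∈ R then f e else 0) - (if tl e ∈ R then f e else 0)) := by
      simp only [netF, Finset.sum_sub_distrib]
      rw [Finset.sum_comm, Finset.sum_comm (s := R)]
      congr 1 <;> (apply Finset.sum_congr rfl; intro e _; rw [Finset.sum_ite_eq])
    rw [hsum]
    apply Finset.sum_nonneg
    intro e _
    by_cases hh : hd e ∈ R <;> by_cases ht : tl e ∈ R <;> simp [hh, ht]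
    · -- hd ∈ R, tl ∉ R : f e ≥ 0
      by_contra hfe
      push_neg at hfe
      exact ht (hclosed _ _ ⟨e, Or.inr ⟨hfe, rfl, rfl⟩⟩ hh)
    · -- tl ∈ R, hd ∉ R : f e ≤ 0
      by_contra hfe
      push_neg at hfe
      exact hh (hclosed _ _ ⟨e, Or.inl ⟨hfe, rfl, rfl⟩⟩ ht)
  have hSneg : ∑ x ∈ R, netF hd tl f x < 0 := by
    rw [← Finset.add_sum_erase R _ hwR]
    have h2 : ∑ x ∈ R.erase w, netF hd tl f x ≤ 0 := by
      apply Finset.sum_nonpos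
      intro x hx
      apply hneg
      intro hxv
      exact hvR (hxv ▸ (Finset.mem_of_mem_erase hx))
    linarith
  linarith

lemma mySign_sq (x : ℝ) : mySign x * mySign x = 1 := by
  unfold mySign; split <;> norm_num

lemma mySign_abs (x : ℝ) : |x| * mySign x = x := by
  rcases lt_trichotomy x 0 with h | h | h
  · rw [mySign_neg h, abs_of_neg h]; ring
  · simp [h, mySign]
  · rw [mySign_pos h, abs_of_pos h]; ring

lemma netF_sub (hd tl : E → V) (f g : E → ℝ) (x : V) :
    netF hd tl (fun e => f e - g e) x = netF hd tl f x - netF hd tl g x := by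
  simp only [netF]
  rw [show (∑ e : E, if hd e = x then f e - g e else 0)
      = (∑ e : E, ((if hd e = x then f e else 0) - (if hd e = x then g e else 0))) by
      apply Finset.sum_congr rfl; intro e _; split <;> simp,
    show (∑ e : E, if tl e = x then f e - g e else 0)
      = (∑ e : E, ((if tl e = x then f e else 0) - (if tl e = x then g e else 0))) by
      apply Finset.sum_congr rfl; intro e _; split <;> simp,
    Finset.sum_sub_distrib, Finset.sum_sub_distrib]
  ring

lemma between_add {a p q : ℝ} (h1 : 0 ≤ p * (a - p)) (h2 : 0 ≤ q * (a - p - q)) :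
    0 ≤ (p + q) * (a - (p + q)) := by
  have hpq : 0 ≤ p * (a - p - q) := by
    rcases lt_trichotomy p 0 with hp | hp | hp
    · have hap : a - p ≤ 0 := by nlinarith
      have h : a - p - q ≤ 0 := by
        by_contra h; push_neg at h
        have hq : 0 ≤ q := by nlinarith
        nlinarith
      nlinarith
    · simp [hp]
    · have hap : 0 ≤ a - p := by nlinarith
      have h : 0 ≤ a - p - q := by
        by_contra h; push_neg at h
        have hq : q ≤ 0 := by nlinarith
        nlinarith
      nlinarith
  nlinarith

lemma netF_zero (hd tl : E → V) (x : V) :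
    netF hd tl (fun _ => (0:ℝ)) x = 0 := by
  simp [netF]

lemma ite_net_helper {V : Type*} [DecidableEq V] (v w x : V) (hvw : w ≠ v) (c : ℝ) :
    c * ((if v = x then 1 else 0) - (if w = x then 1 else 0))
      = if x = v then c else if x = w then -c else 0 := by
  by_cases h1 : x = v
  · subst h1
    rw [if_pos rfl, if_pos rfl, if_neg (fun h => hvw h)]
    ring
  · by_cases h2 : x = w
    · subst h2
      rw [if_neg (fun h => h1 h.symm), if_pos rfl, if_neg h1, if_pos rfl]
      ring
    · rw [if_neg (fun h => h1 h.symm), if_neg (fun h => h2 h.symm), if_neg h1, if_neg h2]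
      ring

lemma subflow [Fintype V] (hd tl : E → V) (v w : V) (hvw : w ≠ v) :
    ∀ (n : ℕ) (f : E → ℝ), (univ.filter (fun e => f e ≠ 0)).card ≤ n →
      (∀ u, u ≠ v → netF hd tl f u ≤ 0) →
      ∃ h : E → ℝ, (∀ e, 0 ≤ h e * (f e - h e)) ∧
        (∀ x, netF hd tl h x =
          if x = v then -netF hd tl f w else if x = w then netF hd tl f w else 0) := by
  intro n
  induction n with
  | zero =>
    intro f hcard hneg
    have hf : ∀ e, f e = 0 := by
      intro e
      by_contra hfe
      have : e ∈ univ.filter (fun e => f e ≠ 0) := mem_filter.mpr ⟨mem_univ e, hfe⟩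
      have := Finset.card_pos.mpr ⟨e, this⟩
      omega
    have hfw : netF hd tl f w = 0 := by
      simp only [netF]
      rw [Finset.sum_eq_zero (fun e _ => by rw [hf e]; simp),
        Finset.sum_eq_zero (fun e _ => by rw [hf e]; simp)]
      ring
    exact ⟨fun _ => 0, fun e => by simp, fun x => by
      rw [hfw]; simpa using (netF_zero hd tl x)⟩
  | succ n ih =>
    intro f hcard hneg
    by_cases hdw : netF hd tl f w = 0
    · exact ⟨fun _ => 0, fun e => by simp, fun x => by
        rw [hdw]; simpa using (netF_zero hd tl x)⟩
    have hdwneg : netF hd tl f w < 0 := lt_of_le_of_ne (hneg w hvw) hdw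
    obtain ⟨L, hL⟩ := exists_fwalk (hd := hd) (tl := tl) hneg hdwneg
    have hLne : L ≠ [] := by
      rintro rfl
      exact hvw hL
    have hFne : L.toFinset.Nonempty := by
      rwa [List.toFinset_nonempty_iff]
    have hcount : ∀ e ∈ L, (0:ℝ) < (L.count e : ℝ) := by
      intro e he
      exact_mod_cast List.count_pos_iff.mpr he
    set m := L.toFinset.inf' hFne (fun e => |f e| / (L.count e : ℝ)) with hm
    have hmpos : 0 < m := by
      rw [hm, Finset.lt_inf'_iff]
      intro e he
      rw [List.mem_toFinset] at he
      exact div_pos (abs_pos.mpr (fwalk_ne_zero hL he)) (hcount e he)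
    set ε := min (-netF hd tl f w) m with hε
    have hεpos : 0 < ε := lt_min (by linarith) hmpos
    have hεd : ε ≤ -netF hd tl f w := min_le_left _ _
    have hbound : ∀ e ∈ L, (L.count e : ℝ) * ε ≤ |f e| := by
      intro e he
      have h1 : ε ≤ |f e| / (L.count e : ℝ) :=
        le_trans (min_le_right _ _) (Finset.inf'_le _ (List.mem_toFinset.mpr he))
      have h2 := hcount e he
      calc (L.count e : ℝ) * ε ≤ (L.count e : ℝ) * (|f e| / (L.count e : ℝ)) := by
            exact mul_le_mul_of_nonneg_left h1 h2.le
        _ = |f e| := by field_simp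
    set p : E → ℝ := fun e => ε * pF f L e with hp
    have hpval : ∀ e, p e = ((L.count e : ℝ) * ε) * mySign (f e) := by
      intro e; simp only [hp, pF]; ring
    have hpnet : ∀ x, netF hd tl p x
        = if x = v then ε else if x = w then -ε else 0 := by
      intro x
      rw [hp, netF_smul, fwalk_netF hL, ite_net_helper v w x hvw]
    have hpbet : ∀ e, 0 ≤ p e * (f e - p e) := by
      intro e
      by_cases heL : e ∈ L
      · have h1 := hbound e heL
        have ht : 0 ≤ (L.count e : ℝ) * ε := by positivity
        have h3 : p e * (f e - p e) = ((L.count e : ℝ) * ε) * (mySign (f e) * f e)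
            - ((L.count e : ℝ) * ε)^2 * (mySign (f e) * mySign (f e)) := by
          rw [hpval e]; ring
        rw [h3, mySign_mul (fwalk_ne_zero hL heL), mySign_sq]
        nlinarith
      · have : p e = 0 := by
          rw [hpval e, List.count_eq_zero_of_not_mem heL]; simp
        simp [this]
    rcases le_or_gt (-netF hd tl f w) m with hcase | hcase
    · -- ε = -netF f w : done with h := p
      have hεe : ε = -netF hd tl f w := min_eq_left hcase
      refine ⟨p, hpbet, fun x => ?_⟩
      rw [hpnet x, hεe]
      by_cases h1 : x = v
      · simp [h1]
      · by_cases h2 : x = w <;> simp [h1, h2]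
    · -- ε = m < -netF f w : recurse
      have hεm : ε = m := min_eq_right hcase.le
      have hεlt : ε < -netF hd tl f w := hεm ▸ hcase
      obtain ⟨e₀, he₀F, he₀⟩ := Finset.exists_mem_eq_inf' hFne (fun e => |f e| / (L.count e : ℝ))
      have he₀L : e₀ ∈ L := List.mem_toFinset.mp he₀F
      have he₀ne : f e₀ ≠ 0 := fwalk_ne_zero hL he₀L
      set f' : E → ℝ := fun e => f e - p e with hf'
      have hf'e₀ : f' e₀ = 0 := by
        have h2 := hcount e₀ he₀L
        have h1 : (L.count e₀ : ℝ) * ε = |f e₀| := by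
          rw [hεm, hm, he₀]
          field_simp
        simp only [hf']
        rw [hpval e₀, h1, mySign_abs]
        ring
      have hsub : univ.filter (fun e => f' e ≠ 0) ⊂ univ.filter (fun e => f e ≠ 0) := by
        constructor
        · intro e he
          rw [mem_filter] at he ⊢
          refine ⟨mem_univ e, ?_⟩
          intro hfe
          apply he.2
          have heL : e ∉ L := fun hh => (fwalk_ne_zero hL hh) hfe
          simp only [hf']
          rw [hpval e, List.count_eq_zero_of_not_mem heL, hfe]
          simp
        · intro hsup
          have h1 : e₀ ∈ univ.filter (fun e => f e ≠ 0) := mem_filter.mpr ⟨mem_univ e₀, he₀ne⟩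
          have h2 := hsup h1
          rw [mem_filter] at h2
          exact h2.2 hf'e₀
      have hcard' : (univ.filter (fun e => f' e ≠ 0)).card ≤ n := by
        have := Finset.card_lt_card hsub
        omega
      have hf'net : ∀ x, netF hd tl f' x = netF hd tl f x
          - (if x = v then ε else if x = w then -ε else 0) := by
        intro x
        simp only [hf']
        rw [netF_sub, hpnet x]
      have hneg' : ∀ u, u ≠ v → netF hd tl f' u ≤ 0 := by
        intro u hu
        rw [hf'net u, if_neg hu]
        by_cases huw : u = w
        · rw [if_pos huw, huw]
          linarith
        · rw [if_neg huw]
          have := hneg u hu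
          linarith
      obtain ⟨h', hbet', hnet'⟩ := ih f' hcard' hneg'
      have hf'w : netF hd tl f' w = netF hd tl f w + ε := by
        rw [hf'net w, if_neg hvw, if_pos rfl]
        ring
      refine ⟨fun e => p e + h' e, ?_, ?_⟩
      · intro e
        have h2' : 0 ≤ h' e * (f e - p e - h' e) := by
          have := hbet' e
          simp only [hf'] at this
          exact this
        exact between_add (hpbet e) h2'
      · intro x
        have : netF hd tl (fun e => p e + h' e) x = netF hd tl p x + netF hd tl h' x :=
          netF_add hd tl p h' x
        rw [this, hpnet x, hnet' x, hf'w]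
        by_cases h1 : x = v
        · simp only [if_pos h1]
          ring
        · by_cases h2 : x = w
          · simp only [if_neg h1, if_pos h2]
            ring
          · simp only [if_neg h1, if_neg h2]
            ring

lemma abs_combo {a b α M : ℝ} (hb : 0 ≤ b * (a - b)) (hα : 0 ≤ α) (hαM : α ≤ 1 + M)
    (hM : 1 ≤ M) : |a - α * b| ≤ M * |a| := by
  rw [abs_le]
  rcases abs_cases a with ⟨h1, h2⟩ | ⟨h1, h2⟩ <;> rw [h1] <;> constructor
  · rcases le_or_gt b 0 with hb0 | hb0
    · nlinarith
    · nlinarith [mul_nonneg hα (show (0:ℝ) ≤ a - b by nlinarith),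
        mul_nonneg (show (0:ℝ) ≤ 1 + M - α by linarith) h2]
  · rcases le_or_gt b 0 with hb0 | hb0
    · have hb1 : ¬ b < 0 := fun h => by nlinarith
      have hb2 : b = 0 := le_antisymm hb0 (not_lt.mp hb1)
      subst hb2; nlinarith
    · nlinarith
  · rcases le_or_gt b 0 with hb0 | hb0
    · nlinarith
    · have hb1 : ¬ 0 < b := fun h => by nlinarith
      exact absurd hb0 hb1
  · rcases le_or_gt b 0 with hb0 | hb0
    · nlinarith [mul_nonneg hα (show (0:ℝ) ≤ b - a by nlinarith),
        mul_nonneg (show (0:ℝ) ≤ 1 + M - α by linarith) (show (0:ℝ) ≤ -a by linarith)]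
    · have hb1 : ¬ 0 < b := fun h => by nlinarith
      exact absurd hb0 hb1

lemma single_commodity [Fintype V] (hd tl : E → V)
    (s0 : V → ℝ) (hs0 : ∀ u, s0 u ≤ 0) (w0 v0 : V)
    (hw0 : ∀ u, |s0 u| ≤ |s0 w0|) (θ : ℕ)
    (hθ : (univ.filter (fun u => s0 u < 0)).card ≤ θ)
    (M : ℝ) (hM1 : 1 ≤ M) (hMθ : (θ:ℝ) - 1 ≤ M)
    (l : ℝ) (hl : 0 ≤ l) (f0 : E → ℝ)
    (hf0 : ∀ x, l * assign s0 v0 x = netF hd tl f0 x) :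
    ∃ g : E → ℝ, (∀ e, |g e| ≤ |f0 e|) ∧
      (∀ x, (l / M) * assign s0 w0 x = netF hd tl g x) := by
  have hM0 : (0:ℝ) < M := by linarith
  by_cases hvw : w0 = v0
  · refine ⟨fun e => (1 / M) * f0 e, ?_, ?_⟩
    · intro e
      rw [abs_mul, abs_of_pos (by positivity : (0:ℝ) < 1 / M)]
      calc (1 / M) * |f0 e| ≤ 1 * |f0 e| := by
            apply mul_le_mul_of_nonneg_right _ (abs_nonneg _)
            rw [div_le_one hM0]; exact hM1
        _ = |f0 e| := one_mul _
    · intro x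
      rw [netF_smul, ← hf0 x, hvw]
      ring
  by_cases hsw : s0 w0 = 0
  · have hall : ∀ u, s0 u = 0 := by
      intro u
      have := hw0 u
      rw [hsw] at this
      simpa using abs_eq_zero.mp (le_antisymm (by simpa using this) (abs_nonneg _))
    have hassign : ∀ x, assign s0 w0 x = 0 := by
      intro x
      simp only [assign]
      split
      · rw [Finset.sum_eq_zero (fun u _ => hall u)]; ring
      · exact hall x
    exact ⟨fun _ => 0, fun e => by simp, fun x => by
      rw [hassign x, netF_zero hd tl x]; ring⟩
  · have hswneg : s0 w0 < 0 := lt_of_le_of_ne (hs0 w0) hsw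
    obtain ⟨T, hT⟩ : ∃ T : ℝ, T = -∑ u : V, s0 u := ⟨_, rfl⟩
    have hT0 : 0 ≤ T := by
      rw [hT, neg_nonneg]
      exact Finset.sum_nonpos (fun u _ => hs0 u)
    have hneg : ∀ u, u ≠ v0 → netF hd tl f0 u ≤ 0 := by
      intro u hu
      rw [← hf0 u]
      simp only [assign, if_neg hu]
      exact mul_nonpos_of_nonneg_of_nonpos hl (hs0 u)
    obtain ⟨h, hbet, hnet⟩ := subflow hd tl v0 w0 hvw
      (univ.filter (fun e => f0 e ≠ 0)).card f0 le_rfl hneg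
    have hfw : netF hd tl f0 w0 = l * s0 w0 := by
      rw [← hf0 w0]
      simp only [assign, if_neg hvw]
    obtain ⟨α, hα⟩ : ∃ a : ℝ, a = T / (-s0 w0) := ⟨_, rfl⟩
    have hα0 : 0 ≤ α := by rw [hα]; exact div_nonneg hT0 (by linarith)
    have hαs : α * s0 w0 = -T := by
      rw [hα, div_neg, neg_mul, div_mul_cancel₀ _ hsw]
    have hαθ : α ≤ (θ : ℝ) := by
      rw [hα, div_le_iff₀ (by linarith : (0:ℝ) < -s0 w0)]
      have h1 : T = ∑ u : V, -s0 u := by rw [hT, ← Finset.sum_neg_distrib]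
      have h2 : ∀ u : V, -s0 u ≤ (if s0 u < 0 then -s0 w0 else 0) := by
        intro u
        by_cases hu : s0 u < 0
        · rw [if_pos hu]
          have := hw0 u
          rw [abs_of_nonpos (hs0 u), abs_of_neg hswneg] at this
          exact this
        · rw [if_neg hu]
          push_neg at hu
          linarith
      calc T ≤ ∑ u : V, (if s0 u < 0 then -s0 w0 else 0) := by
            rw [h1]; exact Finset.sum_le_sum (fun u _ => h2 u)
        _ = (univ.filter (fun u => s0 u < 0)).card * (-s0 w0) := by
            rw [← Finset.sum_filter, Finset.sum_const, nsmul_eq_mul]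
        _ ≤ (θ : ℝ) * (-s0 w0) := by
            apply mul_le_mul_of_nonneg_right _ (by linarith)
            exact_mod_cast hθ
    refine ⟨fun e => (1 / M) * (f0 e - α * h e), ?_, ?_⟩
    · intro e
      rw [abs_mul, abs_of_pos (by positivity : (0:ℝ) < 1 / M)]
      have h1 : |f0 e - α * h e| ≤ M * |f0 e| :=
        abs_combo (hbet e) hα0 (by linarith) hM1
      calc (1 / M) * |f0 e - α * h e| ≤ (1 / M) * (M * |f0 e|) :=
            mul_le_mul_of_nonneg_left h1 (by positivity)
        _ = |f0 e| := by field_simp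
    · intro x
      rw [show (fun e => (1 / M) * (f0 e - α * h e)) = (fun e => (1 / M) * ((fun e' => f0 e' - α * h e') e)) from rfl]
      rw [netF_smul hd tl (1/M) (fun e => f0 e - α * h e) x,
        netF_sub hd tl f0 (fun e => α * h e) x,
        netF_smul hd tl α h x, hnet x, hfw, ← hf0 x]
      have hsum : ∑ u ∈ univ.erase v0, s0 u = (∑ u : V, s0 u) - s0 v0 :=
        Finset.sum_erase_eq_sub (mem_univ v0)
      have hsumw : ∑ u ∈ univ.erase w0, s0 u = (∑ u : V, s0 u) - s0 w0 :=
        Finset.sum_erase_eq_sub (mem_univ w0)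
      have hS : ∑ u : V, s0 u = -T := by rw [hT]; ring
      simp only [assign]
      by_cases h1 : x = v0
      · have h1w : ¬ x = w0 := fun hh => hvw (hh.symm.trans h1)
        rw [if_neg h1w, if_pos h1, if_pos h1, hsum, hS, h1]
        linear_combination (-(l / M)) * hαs
      · by_cases h2 : x = w0
        · rw [if_pos h2, if_neg h1, if_neg h1, if_pos h2, hsumw, hS, h2]
          linear_combination (l / M) * hαs
        · rw [if_neg h2, if_neg h1, if_neg h1, if_neg h2]
          ring

lemma sSup_div_le {A B : Set ℝ} (M : ℝ) (hM : 0 < M) (h0B : (0:ℝ) ∈ B) (hBA : B ⊆ A)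
    (hkey : ∀ l ∈ A, l / M ∈ B) : sSup A / M ≤ sSup B := by
  by_cases hbdd : BddAbove B
  · have hsupB0 : 0 ≤ sSup B := le_csSup hbdd h0B
    rw [div_le_iff₀ hM]
    apply Real.sSup_le _ (by positivity)
    intro x hx
    have h1 : x / M ≤ sSup B := le_csSup hbdd (hkey x hx)
    calc x = (x / M) * M := by field_simp
      _ ≤ sSup B * M := mul_le_mul_of_nonneg_right h1 hM.le
  · have hAbdd : ¬ BddAbove A := fun hA => hbdd (BddAbove.mono hBA hA)
    rw [Real.sSup_of_not_bddAbove hAbdd, Real.sSup_of_not_bddAbove hbdd, zero_div]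

end AuxLoMuF

/-- Theorem: choosing a master source `w i` (a vertex maximizing `|s i v|`) as
the target of each supply vector `s i` is a `max{θ-1,1}`-approximate solution
to LoMuF, where `θ` is the largest number of sources of any supply vector. -/
theorem master_source_approx {V E ι : Type*} [Fintype V] [Fintype E] [Fintype ι]
    [DecidableEq V]
    (hd tl : E → V) (c : E → ℝ) (hc : ∀ e, 0 ≤ c e)
    (s : ι → V → ℝ) (hs : ∀ i v, s i v ≤ 0)
    (θ : ℕ) (hθ : θ = univ.sup (fun i : ι => (univ.filter (fun v => s i v < 0)).card))
    (w : ι → V) (hw : ∀ i v, |s i v| ≤ |s i (w i)|) :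
    lamS hd tl c s / max ((θ : ℝ) - 1) 1
      ≤ lamD hd tl c (fun i => assign (s i) (w i)) := by
  classical
  have hM1 : (1:ℝ) ≤ max ((θ:ℝ) - 1) 1 := le_max_right _ _
  have hMθ : (θ:ℝ) - 1 ≤ max ((θ:ℝ) - 1) 1 := le_max_left _ _
  have hM0 : (0:ℝ) < max ((θ:ℝ) - 1) 1 := by linarith
  unfold lamS lamD
  apply sSup_div_le _ hM0
  · -- 0 ∈ B
    refine ⟨le_refl 0, fun _ _ => 0, fun e => ?_, fun i u => ?_⟩
    · simpa using hc e
    · simp [satisfiesFlow]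
  · -- B ⊆ A
    rintro l ⟨hl, f, hcap, hsat⟩
    exact ⟨hl, w, f, hcap, hsat⟩
  · -- key step
    rintro l ⟨hl, v, f, hcap, hsat⟩
    have hgs : ∀ i, ∃ g : E → ℝ, (∀ e, |g e| ≤ |f i e|) ∧
        (∀ x, (l / max ((θ:ℝ) - 1) 1) * assign (s i) (w i) x = netF hd tl g x) := by
      intro i
      refine single_commodity hd tl (s i) (hs i) (w i) (v i) (hw i) θ ?_ _ hM1 hMθ l hl (f i) ?_
      · rw [hθ]
        exact Finset.le_sup (f := fun i : ι => (univ.filter (fun v => s i v < 0)).card) (mem_univ i)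
      · intro x
        exact hsat i x
    choose g hg1 hg2 using hgs
    refine ⟨div_nonneg hl hM0.le, g, fun e => ?_, fun i x => ?_⟩
    · exact le_trans (Finset.sum_le_sum (fun i _ => hg1 i e)) (hcap e)
    · exact hg2 i x
end
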